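/- arXiv:1610.00298 — 2 statements merged into one kernel-verified Lean document; each statement's English description precedes it below -/
import Mathlib

section
/- Let I ⊆ k[x_1,…,x_n] be an ideal, let ℚ^r carry the lexicographic order, and let M ∈ ℚ^{r×n}. Then there exists a single weight vector u ∈ ℚ^n such that in_M(I) = in_u(I). -/
open MvPolynomial
open scoped Classical

instance finWellFoundedLT {r : ℕ} : WellFoundedLT (Fin r) := Finite.to_wellFoundedLT

/-- The initial form of a polynomial with respect to a comparison `le` on exponent vectors:
the sum of the terms of `f` whose exponent is `le`-minimal in the support of `f`. -/
noncomputable def initialForm {k : Type} [Field k] {n : ℕ}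
    (le : (Fin n →₀ ℕ) → (Fin n →₀ ℕ) → Prop)
    (f : MvPolynomial (Fin n) k) : MvPolynomial (Fin n) k :=
  letI := Classical.decPred fun α : Fin n →₀ ℕ => ∀ β ∈ f.support, le α β
  ∑ α ∈ f.support.filter (fun α => ∀ β ∈ f.support, le α β),
    monomial α (MvPolynomial.coeff α f)

/-- The initial ideal of `I`: the ideal generated by initial forms of nonzero elements of `I`. -/
noncomputable def initialIdeal {k : Type} [Field k] {n : ℕ}
    (le : (Fin n →₀ ℕ) → (Fin n →₀ ℕ) → Prop)
    (I : Ideal (MvPolynomial (Fin n) k)) : Ideal (MvPolynomial (Fin n) k) :=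
  Ideal.span {g | ∃ f ∈ I, f ≠ 0 ∧ g = initialForm le f}

/-- The weight `Mα ∈ ℚ^r` of an exponent vector `α` under the weighting matrix `M`. -/
def mwt {n r : ℕ} (M : Matrix (Fin r) (Fin n) ℚ) (α : Fin n →₀ ℕ) : Fin r → ℚ :=
  fun i => ∑ j, M i j * (α j : ℚ)

/-- Comparison of exponents by `M`-weight, in the lexicographic order on `ℚ^r`. -/
def mLe {n r : ℕ} (M : Matrix (Fin r) (Fin n) ℚ) : (Fin n →₀ ℕ) → (Fin n →₀ ℕ) → Prop :=
  fun α β => toLex (mwt M α) ≤ toLex (mwt M β)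

/-- The weight `u·α ∈ ℚ` of an exponent vector under a single weight vector `u ∈ ℚ^n`. -/
def uwt {n : ℕ} (u : Fin n → ℚ) (α : Fin n →₀ ℕ) : ℚ := ∑ j, u j * (α j : ℚ)

/-- Comparison of exponents by `u`-weight. -/
def uLe {n : ℕ} (u : Fin n → ℚ) : (Fin n →₀ ℕ) → (Fin n →₀ ℕ) → Prop :=
  fun α β => uwt u α ≤ uwt u β

section A

variable {k : Type} [Field k] {m : ℕ} {G : Type} [AddCommGroup G] [LinearOrder G] [IsOrderedAddMonoid G] [DecidableEq G]

/-- the preorder relation attached to a weight function -/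
def wle (W : (Fin m →₀ ℕ) → G) : (Fin m →₀ ℕ) → (Fin m →₀ ℕ) → Prop :=
  fun α β => W α ≤ W β

/-- the weight-`q` homogeneous component of a polynomial -/
noncomputable def wcomp (W : (Fin m →₀ ℕ) → G) (q : G) (f : MvPolynomial (Fin m) k) :
    MvPolynomial (Fin m) k :=
  ∑ α ∈ f.support.filter (fun α => W α = q), monomial α (MvPolynomial.coeff α f)

variable (W : (Fin m →₀ ℕ) → G)

lemma coeff_initialForm (le : (Fin m →₀ ℕ) → (Fin m →₀ ℕ) → Prop)
    (f : MvPolynomial (Fin m) k) (γ : Fin m →₀ ℕ) :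
    coeff γ (initialForm le f) =
      if γ ∈ f.support ∧ (∀ β ∈ f.support, le γ β) then coeff γ f else 0 := by
  classical
  simp only [initialForm]
  rw [coeff_sum]
  simp only [coeff_monomial]
  simp only [Finset.sum_ite_eq']
  simp only [Finset.mem_filter]

lemma coeff_wcomp (q : G) (f : MvPolynomial (Fin m) k) (γ : Fin m →₀ ℕ) :
    coeff γ (wcomp W q f) = if W γ = q then coeff γ f else 0 := by
  classical
  simp only [wcomp]
  rw [coeff_sum]
  simp only [coeff_monomial]
  simp only [Finset.sum_ite_eq']
  by_cases h : W γ = q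
  · by_cases hγ : coeff γ f = 0 <;> simp [Finset.mem_filter, h, hγ]
  · simp [Finset.mem_filter, h]

lemma mem_support_wcomp (q : G) (f : MvPolynomial (Fin m) k) (γ : Fin m →₀ ℕ)
    (hγ : γ ∈ (wcomp W q f).support) : W γ = q ∧ γ ∈ f.support := by
  rw [mem_support_iff, coeff_wcomp] at hγ
  by_cases h : W γ = q
  · exact ⟨h, by rw [if_pos h] at hγ; exact mem_support_iff.mpr hγ⟩
  · rw [if_neg h] at hγ; exact absurd rfl hγ

lemma support_wcomp (q : G) (f : MvPolynomial (Fin m) k) :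
    (wcomp W q f).support = f.support.filter (fun α => W α = q) := by
  classical
  ext γ
  rw [mem_support_iff, coeff_wcomp, Finset.mem_filter, mem_support_iff]
  by_cases h : W γ = q <;> simp [h]

lemma wcomp_add (q : G) (f g : MvPolynomial (Fin m) k) :
    wcomp W q (f + g) = wcomp W q f + wcomp W q g := by
  ext γ
  simp only [coeff_add, coeff_wcomp]
  split_ifs <;> simp

lemma wcomp_sum {ι : Type*} (q : G) (s : Finset ι) (F : ι → MvPolynomial (Fin m) k) :
    wcomp W q (∑ i ∈ s, F i) = ∑ i ∈ s, wcomp W q (F i) := by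
  ext γ
  rw [coeff_sum]
  simp only [coeff_wcomp, coeff_sum]
  split_ifs <;> simp

lemma sum_wcomp (f : MvPolynomial (Fin m) k) :
    ∑ q ∈ f.support.image W, wcomp W q f = f := by
  classical
  ext γ
  rw [coeff_sum]
  simp only [coeff_wcomp]
  simp only [Finset.sum_ite_eq]
  by_cases hγ : coeff γ f = 0
  · simp [hγ]
  · rw [if_pos (Finset.mem_image_of_mem W (mem_support_iff.mpr hγ))]

/-- `f` is weight-homogeneous of weight `q` -/
def WHomog (W : (Fin m →₀ ℕ) → G) (q : G) (f : MvPolynomial (Fin m) k) : Prop :=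
  ∀ α ∈ f.support, W α = q

lemma whomog_wcomp (q : G) (f : MvPolynomial (Fin m) k) : WHomog W q (wcomp W q f) :=
  fun γ hγ => (mem_support_wcomp W q f γ hγ).1

lemma wcomp_of_whomog {q : G} {f : MvPolynomial (Fin m) k} (hf : WHomog W q f) :
    wcomp W q f = f := by
  ext γ
  rw [coeff_wcomp]
  by_cases hγ : coeff γ f = 0
  · simp [hγ]
  · rw [if_pos (hf γ (mem_support_iff.mpr hγ))]

lemma wcomp_of_whomog_ne {q q' : G} {f : MvPolynomial (Fin m) k} (hf : WHomog W q f)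
    (hne : q' ≠ q) : wcomp W q' f = 0 := by
  ext γ
  rw [coeff_wcomp, coeff_zero]
  by_cases hγ : coeff γ f = 0
  · simp [hγ]
  · rw [if_neg]
    exact fun h => hne (h ▸ (hf γ (mem_support_iff.mpr hγ)).symm ▸ rfl)

/-- spec of a minimal weight of `f` -/
def IsMinWt (W : (Fin m →₀ ℕ) → G) (f : MvPolynomial (Fin m) k) (q : G) : Prop :=
  (∃ α ∈ f.support, W α = q) ∧ ∀ β ∈ f.support, q ≤ W β

lemma exists_isMinWt {f : MvPolynomial (Fin m) k} (hf : f ≠ 0) : ∃ q, IsMinWt W f q := by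
  obtain ⟨α, hα, hmin⟩ := Finset.exists_min_image f.support W
    (MvPolynomial.support_nonempty.mpr hf)
  exact ⟨W α, ⟨α, hα, rfl⟩, hmin⟩

lemma isMinWt_unique {f : MvPolynomial (Fin m) k} {q q' : G} (h : IsMinWt W f q)
    (h' : IsMinWt W f q') : q = q' := by
  obtain ⟨⟨α, hα, hq⟩, hmin⟩ := h
  obtain ⟨⟨α', hα', hq'⟩, hmin'⟩ := h'
  exact le_antisymm (hq' ▸ hmin α' hα') (hq ▸ hmin' α hα)

lemma initialForm_eq_wcomp {f : MvPolynomial (Fin m) k} {q : G} (h : IsMinWt W f q) :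
    initialForm (wle W) f = wcomp W q f := by
  obtain ⟨⟨α0, hα0, hq0⟩, hmin⟩ := h
  ext γ
  rw [coeff_initialForm, coeff_wcomp]
  by_cases hγ : γ ∈ f.support
  · have : (∀ β ∈ f.support, wle W γ β) ↔ W γ = q := by
      constructor
      · intro hall
        exact le_antisymm (hq0 ▸ hall α0 hα0) (hmin γ hγ)
      · intro he β hβ
        show W γ ≤ W β
        rw [he]
        exact hmin β hβ
    by_cases hw : W γ = q
    · rw [if_pos hw, if_pos ⟨hγ, this.mpr hw⟩]
    · rw [if_neg hw, if_neg (fun hc => hw (this.mp hc.2))]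
  · rw [if_neg (fun hc => hγ hc.1)]
    split_ifs with h'
    · exact ((mem_support_iff.not_left.mp hγ)).symm ▸ rfl
    · rfl

lemma whomog_initialForm {f : MvPolynomial (Fin m) k} {q : G} (h : IsMinWt W f q) :
    WHomog W q (initialForm (wle W) f) := by
  rw [initialForm_eq_wcomp W h]
  exact whomog_wcomp W q f

lemma initialForm_ne_zero {f : MvPolynomial (Fin m) k} {q : G} (h : IsMinWt W f q)
    (hf : f ≠ 0) : initialForm (wle W) f ≠ 0 := by
  rw [initialForm_eq_wcomp W h]
  obtain ⟨⟨α, hα, hq⟩, _⟩ := h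
  intro hc
  have := coeff_wcomp W q f α
  rw [hc, coeff_zero, if_pos hq] at this
  exact mem_support_iff.mp hα this.symm

lemma initialForm_of_whomog {f : MvPolynomial (Fin m) k} {q : G} (hf : WHomog W q f)
    (h0 : f ≠ 0) : initialForm (wle W) f = f := by
  have hmin : IsMinWt W f q := by
    obtain ⟨α, hα⟩ := MvPolynomial.support_nonempty.mpr h0
    exact ⟨⟨α, hα, hf α hα⟩, fun β hβ => (hf β hβ).ge⟩
  rw [initialForm_eq_wcomp W hmin, wcomp_of_whomog W hf]

lemma support_initialForm_subset (le : (Fin m →₀ ℕ) → (Fin m →₀ ℕ) → Prop)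
    (f : MvPolynomial (Fin m) k) : (initialForm le f).support ⊆ f.support := by
  intro γ hγ
  rw [mem_support_iff, coeff_initialForm] at hγ
  by_cases h : γ ∈ f.support ∧ ∀ β ∈ f.support, le γ β
  · exact h.1
  · rw [if_neg h] at hγ; exact absurd rfl hγ

section mulW
variable (hW : ∀ a b : Fin m →₀ ℕ, W (a + b) = W a + W b)
include hW

lemma wcomp_mul_homog {h : MvPolynomial (Fin m) k} {w : G} (hh : WHomog W w h)
    (q : G) (f : MvPolynomial (Fin m) k) :
    wcomp W q (f * h) = wcomp W (q - w) f * h := by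
  ext γ
  rw [coeff_wcomp, coeff_mul, coeff_mul]
  have key : ∀ x ∈ Finset.HasAntidiagonal.antidiagonal γ,
      (if W γ = q then coeff x.1 f * coeff x.2 h else 0) =
      coeff x.1 (wcomp W (q - w) f) * coeff x.2 h := by
    intro x hx
    rw [coeff_wcomp]
    by_cases h2 : coeff x.2 h = 0
    · rw [h2, mul_zero, mul_zero]; split_ifs <;> rfl
    · have hw2 : W x.2 = w := hh x.2 (mem_support_iff.mpr h2)
      have hadd : x.1 + x.2 = γ := Finset.HasAntidiagonal.mem_antidiagonal.mp hx
      have hWγ : W γ = W x.1 + w := by rw [← hadd, hW, hw2]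
      by_cases hq : W γ = q
      · rw [if_pos hq, if_pos (by rw [← hq, hWγ]; abel)]
      · rw [if_neg hq, if_neg (fun hc => hq (by rw [hWγ, hc]; abel)), zero_mul]
  calc (if W γ = q then ∑ x ∈ Finset.HasAntidiagonal.antidiagonal γ, coeff x.1 f * coeff x.2 h else 0)
      = ∑ x ∈ Finset.HasAntidiagonal.antidiagonal γ,
          (if W γ = q then coeff x.1 f * coeff x.2 h else 0) := by
        split_ifs <;> simp
    _ = ∑ x ∈ Finset.HasAntidiagonal.antidiagonal γ, coeff x.1 (wcomp W (q - w) f) * coeff x.2 h :=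
        Finset.sum_congr rfl key

lemma whomog_mul {f h : MvPolynomial (Fin m) k} {q w : G} (hf : WHomog W q f)
    (hh : WHomog W w h) : WHomog W (q + w) (f * h) := by
  intro γ hγ
  obtain ⟨a, ha, b, hb, rfl⟩ := Finset.mem_add.mp (MvPolynomial.support_mul f h hγ)
  rw [hW, hf a ha, hh b hb]

lemma isMinWt_mul_homog {f h : MvPolynomial (Fin m) k} {q w : G}
    (hmin : IsMinWt W f q) (hh : WHomog W w h) (hh0 : h ≠ 0) (hf0 : f ≠ 0) :
    IsMinWt W (f * h) (q + w) := by
  constructor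
  · have hne : wcomp W (q + w) (f * h) ≠ 0 := by
      rw [wcomp_mul_homog W hW hh (q + w) f, show q + w - w = q from by abel,
        ← initialForm_eq_wcomp W hmin]
      exact mul_ne_zero (initialForm_ne_zero W hmin hf0) hh0
    obtain ⟨γ, hγ⟩ := MvPolynomial.support_nonempty.mpr hne
    obtain ⟨hwγ, hγ2⟩ := mem_support_wcomp W _ _ γ hγ
    exact ⟨γ, hγ2, hwγ⟩
  · intro β hβ
    obtain ⟨a, ha, b, hb, rfl⟩ := Finset.mem_add.mp (MvPolynomial.support_mul f h hβ)
    rw [hW, hh b hb]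
    exact add_le_add_left (hmin.2 a ha) w

lemma initialForm_mul_homog {f h : MvPolynomial (Fin m) k} {q w : G}
    (hmin : IsMinWt W f q) (hh : WHomog W w h) (hh0 : h ≠ 0) (hf0 : f ≠ 0) :
    initialForm (wle W) (f * h) = initialForm (wle W) f * h := by
  rw [initialForm_eq_wcomp W (isMinWt_mul_homog W hW hmin hh hh0 hf0),
    wcomp_mul_homog W hW hh, show q + w - w = q from by abel,
    initialForm_eq_wcomp W hmin]

lemma wcomp_mul (r g : MvPolynomial (Fin m) k) (q : G) :
    wcomp W q (r * g) = ∑ w ∈ r.support.image W, wcomp W w r * wcomp W (q - w) g := by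
  have hr : r * g = ∑ w ∈ r.support.image W, wcomp W w r * g := by
    rw [← Finset.sum_mul, sum_wcomp]
  rw [hr, wcomp_sum]
  refine Finset.sum_congr rfl (fun w _ => ?_)
  rw [mul_comm (wcomp W w r) g, wcomp_mul_homog W hW (whomog_wcomp W w r) q g,
    mul_comm]

end mulW

lemma initialForm_add {f g : MvPolynomial (Fin m) k} {q : G}
    (hf : IsMinWt W f q) (hg : IsMinWt W g q)
    (hne : initialForm (wle W) f + initialForm (wle W) g ≠ 0) :
    f + g ≠ 0 ∧ IsMinWt W (f + g) q ∧
      initialForm (wle W) (f + g) = initialForm (wle W) f + initialForm (wle W) g := by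
  have hsum : wcomp W q (f + g) = initialForm (wle W) f + initialForm (wle W) g := by
    rw [wcomp_add, initialForm_eq_wcomp W hf, initialForm_eq_wcomp W hg]
  have hfg : f + g ≠ 0 := by
    intro hc
    rw [hc] at hsum
    apply hne
    rw [← hsum]
    ext γ; rw [coeff_wcomp]; split_ifs <;> simp
  have hminfg : IsMinWt W (f + g) q := by
    constructor
    · have : wcomp W q (f + g) ≠ 0 := hsum ▸ hne
      obtain ⟨γ, hγ⟩ := MvPolynomial.support_nonempty.mpr this
      obtain ⟨hwγ, hγ2⟩ := mem_support_wcomp W _ _ γ hγ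
      exact ⟨γ, hγ2, hwγ⟩
    · intro β hβ
      rcases Finset.mem_union.mp (Finsupp.support_add hβ) with h | h
      · exact hf.2 β h
      · exact hg.2 β h
  exact ⟨hfg, hminfg, by rw [initialForm_eq_wcomp W hminfg, hsum]⟩

section B

/-- `p` is zero or an initial form (with minimal weight `q`) of a nonzero element of `I` -/
def GoodAt (W : (Fin m →₀ ℕ) → G) (I : Ideal (MvPolynomial (Fin m) k)) (q : G)
    (p : MvPolynomial (Fin m) k) : Prop :=
  p = 0 ∨ ∃ f, f ∈ I ∧ f ≠ 0 ∧ IsMinWt W f q ∧ p = initialForm (wle W) f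

variable {I : Ideal (MvPolynomial (Fin m) k)}

lemma goodAt_add {q : G} {p1 p2 : MvPolynomial (Fin m) k}
    (h1 : GoodAt W I q p1) (h2 : GoodAt W I q p2) : GoodAt W I q (p1 + p2) := by
  rcases h1 with rfl | ⟨f1, hf1I, hf10, hf1m, rfl⟩
  · simpa using h2
  rcases h2 with rfl | ⟨f2, hf2I, hf20, hf2m, rfl⟩
  · right; exact ⟨f1, hf1I, hf10, hf1m, by simp⟩
  by_cases hs : initialForm (wle W) f1 + initialForm (wle W) f2 = 0
  · left; exact hs
  obtain ⟨hfg, hmin, heq⟩ := initialForm_add W hf1m hf2m hs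
  right
  exact ⟨f1 + f2, I.add_mem hf1I hf2I, hfg, hmin, heq.symm⟩

lemma goodAt_mul_homog (hW : ∀ a b : Fin m →₀ ℕ, W (a + b) = W a + W b)
    {q w : G} {p h : MvPolynomial (Fin m) k} (hh : WHomog W w h)
    (hp : GoodAt W I q p) : GoodAt W I (q + w) (p * h) := by
  by_cases hh0 : h = 0
  · left; rw [hh0, mul_zero]
  rcases hp with rfl | ⟨f, hfI, hf0, hfm, rfl⟩
  · left; rw [zero_mul]
  right
  exact ⟨f * h, Ideal.mul_mem_right h I hfI, mul_ne_zero hf0 hh0,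
    isMinWt_mul_homog W hW hfm hh hh0 hf0,
    (initialForm_mul_homog W hW hfm hh hh0 hf0).symm⟩

lemma goodAt_sum {q : G} {ι : Type*} (s : Finset ι) (F : ι → MvPolynomial (Fin m) k)
    (h : ∀ i ∈ s, GoodAt W I q (F i)) : GoodAt W I q (∑ i ∈ s, F i) := by
  classical
  induction s using Finset.induction_on with
  | empty => left; simp
  | insert _ _ hx ih =>
    rw [Finset.sum_insert hx]
    exact goodAt_add W (h _ (Finset.mem_insert_self _ _))
      (ih fun i hi => h i (Finset.mem_insert_of_mem hi))

lemma wcomp_zero (q : G) : wcomp W q (0 : MvPolynomial (Fin m) k) = 0 := by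
  simp [wcomp]

theorem goodAt_of_mem_initialIdeal (hW : ∀ a b : Fin m →₀ ℕ, W (a + b) = W a + W b)
    {g : MvPolynomial (Fin m) k} (hg : g ∈ initialIdeal (wle W) I) (q : G) :
    GoodAt W I q (wcomp W q g) := by
  rw [initialIdeal] at hg
  induction hg using Submodule.span_induction generalizing q with
  | mem x hx =>
    obtain ⟨f, hfI, hf0, rfl⟩ := hx
    obtain ⟨q0, hq0⟩ := exists_isMinWt W hf0
    by_cases hq : q = q0
    · subst hq
      rw [wcomp_of_whomog W (whomog_initialForm W hq0)]
      exact Or.inr ⟨f, hfI, hf0, hq0, rfl⟩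
    · rw [wcomp_of_whomog_ne W (whomog_initialForm W hq0) hq]
      exact Or.inl rfl
  | zero => rw [wcomp_zero]; exact Or.inl rfl
  | add x y hx hy ihx ihy => rw [wcomp_add]; exact goodAt_add W (ihx q) (ihy q)
  | smul a x hx ih =>
    rw [smul_eq_mul, wcomp_mul W hW a x q]
    refine goodAt_sum W _ _ (fun w _ => ?_)
    have := goodAt_mul_homog W hW (whomog_wcomp W w a) (ih (q - w))
    rw [mul_comm]
    convert this using 2
    abel

/-- closure of a span under weight-homogeneous components -/
theorem wcomp_mem_span (hW : ∀ a b : Fin m →₀ ℕ, W (a + b) = W a + W b)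
    {S : Set (MvPolynomial (Fin m) k)}
    (hS : ∀ s ∈ S, ∀ q : G, wcomp W q s ∈ Ideal.span S)
    {g : MvPolynomial (Fin m) k} (hg : g ∈ Ideal.span S) (q : G) :
    wcomp W q g ∈ Ideal.span S := by
  induction hg using Submodule.span_induction generalizing q with
  | mem x hx => exact hS x hx q
  | zero => rw [wcomp_zero]; exact Ideal.zero_mem _
  | add x y hx hy ihx ihy => rw [wcomp_add]; exact Ideal.add_mem _ (ihx q) (ihy q)
  | smul a x hx ih =>
    rw [smul_eq_mul, wcomp_mul W hW a x q]
    exact Ideal.sum_mem _ (fun w _ => Ideal.mul_mem_left _ _ (ih (q - w)))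

variable {G' : Type} [AddCommGroup G'] [LinearOrder G'] [IsOrderedAddMonoid G'] [DecidableEq G'] (V : (Fin m →₀ ℕ) → G')

/-- cross-grading: a nonzero `V`-component of an initial form is the initial form
of the corresponding `V`-component -/
lemma wcomp_initialForm_cross {g : MvPolynomial (Fin m) k} (hg : g ≠ 0) {d : G'}
    (hne : wcomp V d (initialForm (wle W) g) ≠ 0) :
    wcomp V d g ≠ 0 ∧
      wcomp V d (initialForm (wle W) g) = initialForm (wle W) (wcomp V d g) := by
  obtain ⟨q, hq⟩ := exists_isMinWt W hg
  rw [initialForm_eq_wcomp W hq] at hne ⊢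
  obtain ⟨γ0, hγ0⟩ := MvPolynomial.support_nonempty.mpr hne
  have hγ0' := mem_support_wcomp V d _ γ0 hγ0
  have hγ0'' := mem_support_wcomp W q g γ0 hγ0'.2
  have hco : ∀ γ : Fin m →₀ ℕ, coeff γ (wcomp V d (wcomp W q g)) =
      coeff γ (wcomp W q (wcomp V d g)) := by
    intro γ
    simp only [coeff_wcomp]
    split_ifs <;> rfl
  have h1 : wcomp V d g ≠ 0 := by
    intro hc
    apply hne
    ext γ
    rw [hco γ, hc, wcomp_zero]
  have hmin : IsMinWt W (wcomp V d g) q := by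
    constructor
    · refine ⟨γ0, ?_, hγ0''.1⟩
      rw [mem_support_iff, coeff_wcomp, if_pos hγ0'.1]
      exact mem_support_iff.mp hγ0''.2
    · intro β hβ
      exact hq.2 β (mem_support_wcomp V d g β hβ).2
  refine ⟨h1, ?_⟩
  rw [initialForm_eq_wcomp W hmin]
  ext γ
  exact hco γ

end B
end A
section C

variable {k : Type} [Field k]

/-- total degree of an exponent vector -/
def degN {m : ℕ} (α : Fin m →₀ ℕ) : ℕ := ∑ j, α j

/-- total degree as an integer-valued weight -/
def dwt {m : ℕ} : (Fin m →₀ ℕ) → ℤ := fun α => (degN α : ℤ)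

lemma degN_add {m : ℕ} (a b : Fin m →₀ ℕ) : degN (a + b) = degN a + degN b := by
  simp [degN, Finset.sum_add_distrib]

lemma dwt_add {m : ℕ} : ∀ a b : Fin m →₀ ℕ, dwt (a + b) = dwt a + dwt b := by
  intro a b
  simp [dwt, degN_add]

variable {n : ℕ}

/-- lift an exponent vector to degree `e` by padding with the extra variable -/
noncomputable def mlift (e : ℕ) (α : Fin n →₀ ℕ) : Fin (n + 1) →₀ ℕ := Finsupp.cons (e - degN α) α

lemma degN_cons (a : ℕ) (α : Fin n →₀ ℕ) : degN (Finsupp.cons a α) = a + degN α := by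
  simp [degN, Fin.sum_univ_succ, Finsupp.cons_zero, Finsupp.cons_succ]

lemma tail_mlift (e : ℕ) (α : Fin n →₀ ℕ) : Finsupp.tail (mlift e α) = α :=
  Finsupp.tail_cons _ _

lemma degN_tail_le (β : Fin (n + 1) →₀ ℕ) : degN (Finsupp.tail β) ≤ degN β := by
  conv_rhs => rw [← Finsupp.cons_tail β]
  rw [degN_cons]
  omega

lemma degN_mlift {e : ℕ} {α : Fin n →₀ ℕ} (h : degN α ≤ e) : degN (mlift e α) = e := by
  rw [mlift, degN_cons]
  omega

lemma mlift_tail_eq {e : ℕ} {β : Fin (n + 1) →₀ ℕ} (h : degN β = e) :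
    mlift e (Finsupp.tail β) = β := by
  have h2 : degN β = β 0 + degN (Finsupp.tail β) := by
    rw [← degN_cons (β 0) (Finsupp.tail β), Finsupp.cons_tail]
  rw [mlift, show e - degN (Finsupp.tail β) = β 0 by omega]
  exact Finsupp.cons_tail β

/-- homogenization of `f` at degree `e` -/
noncomputable def homAt (e : ℕ) (f : MvPolynomial (Fin n) k) :
    MvPolynomial (Fin (n + 1)) k :=
  ∑ α ∈ f.support, monomial (mlift e α) (coeff α f)

lemma coeff_homAt {e : ℕ} {f : MvPolynomial (Fin n) k}
    (hd : ∀ α ∈ f.support, degN α ≤ e) (β : Fin (n + 1) →₀ ℕ) :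
    coeff β (homAt e f) = if degN β = e then coeff (Finsupp.tail β) f else 0 := by
  classical
  rw [homAt, coeff_sum]
  simp only [coeff_monomial]
  by_cases hdb : degN β = e
  · rw [if_pos hdb]
    have : ∀ α ∈ f.support, (mlift e α = β) = (α = Finsupp.tail β) := by
      intro α hα
      apply propext
      constructor
      · intro h; rw [← h, tail_mlift]
      · intro h; rw [h]; exact mlift_tail_eq hdb
    rw [Finset.sum_congr rfl (fun α hα => if_congr (iff_of_eq (this α hα)) rfl rfl)]
    rw [Finset.sum_ite_eq' f.support (Finsupp.tail β) (fun α => coeff α f)]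
    by_cases hm : Finsupp.tail β ∈ f.support
    · rw [if_pos hm]
    · rw [if_neg hm, (mem_support_iff.not_left.mp hm)]
  · rw [if_neg hdb]
    refine Finset.sum_eq_zero (fun α hα => ?_)
    rw [if_neg (fun hc => hdb (by rw [← hc, degN_mlift (hd α hα)]))]

lemma homAt_ne_zero {e : ℕ} {f : MvPolynomial (Fin n) k}
    (hd : ∀ α ∈ f.support, degN α ≤ e) (hf : f ≠ 0) : homAt e f ≠ 0 := by
  obtain ⟨α, hα⟩ := MvPolynomial.support_nonempty.mpr hf
  intro hc
  have := coeff_homAt hd (mlift e α)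
  rw [hc, coeff_zero, if_pos (degN_mlift (hd α hα)), tail_mlift] at this
  exact mem_support_iff.mp hα this.symm

lemma whomog_homAt {e : ℕ} {f : MvPolynomial (Fin n) k}
    (hd : ∀ α ∈ f.support, degN α ≤ e) : WHomog dwt ((e : ℕ) : ℤ) (homAt e f) := by
  intro β hβ
  rw [mem_support_iff, coeff_homAt hd] at hβ
  by_cases h : degN β = e
  · rw [dwt, h]
  · rw [if_neg h] at hβ; exact absurd rfl hβ

section Wext

variable {G : Type} [AddCommGroup G] [LinearOrder G] [IsOrderedAddMonoid G] [DecidableEq G]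
variable (W : (Fin n →₀ ℕ) → G)

/-- extension of a weight to the homogenizing variable (which gets weight 0) -/
noncomputable def wext : (Fin (n + 1) →₀ ℕ) → G := fun β => W (Finsupp.tail β)

lemma tail_add (a b : Fin (n + 1) →₀ ℕ) :
    Finsupp.tail (a + b) = Finsupp.tail a + Finsupp.tail b := by
  ext i
  simp [Finsupp.tail_apply]

lemma wext_add (hW : ∀ a b : Fin n →₀ ℕ, W (a + b) = W a + W b) :
    ∀ a b : Fin (n + 1) →₀ ℕ, wext W (a + b) = wext W a + wext W b := by
  intro a b
  rw [wext, tail_add, hW]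
  rfl

lemma wcomp_homAt {e : ℕ} {f : MvPolynomial (Fin n) k}
    (hd : ∀ α ∈ f.support, degN α ≤ e) (q : G) :
    wcomp (wext W) q (homAt e f) = homAt e (wcomp W q f) := by
  have hd2 : ∀ α ∈ (wcomp W q f).support, degN α ≤ e :=
    fun α hα => hd α (mem_support_wcomp W q f α hα).2
  ext β
  rw [coeff_wcomp, coeff_homAt hd2, coeff_homAt hd, coeff_wcomp]
  simp only [wext]
  by_cases h1 : W (Finsupp.tail β) = q <;> by_cases h2 : degN β = e <;>
    simp [h1, h2]

lemma isMinWt_homAt {e : ℕ} {f : MvPolynomial (Fin n) k} {q : G}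
    (hd : ∀ α ∈ f.support, degN α ≤ e) (hq : IsMinWt W f q) :
    IsMinWt (wext W) (homAt e f) q := by
  constructor
  · obtain ⟨α, hα, hwα⟩ := hq.1
    refine ⟨mlift e α, ?_, by rw [wext, tail_mlift]; exact hwα⟩
    rw [mem_support_iff, coeff_homAt hd, if_pos (degN_mlift (hd α hα)), tail_mlift]
    exact mem_support_iff.mp hα
  · intro β hβ
    rw [mem_support_iff, coeff_homAt hd] at hβ
    by_cases h : degN β = e
    · rw [if_pos h] at hβ
      exact hq.2 _ (mem_support_iff.mpr hβ)
    · rw [if_neg h] at hβ; exact absurd rfl hβ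

lemma initialForm_homAt {e : ℕ} {f : MvPolynomial (Fin n) k}
    (hd : ∀ α ∈ f.support, degN α ≤ e) (hf : f ≠ 0) :
    initialForm (wle (wext W)) (homAt e f) = homAt e (initialForm (wle W) f) := by
  obtain ⟨q, hq⟩ := exists_isMinWt W hf
  rw [initialForm_eq_wcomp (wext W) (isMinWt_homAt W hd hq), wcomp_homAt W hd,
    initialForm_eq_wcomp W hq]

end Wext

/-- dehomogenization: substitute 1 for the extra variable -/
noncomputable def deh : MvPolynomial (Fin (n + 1)) k →ₐ[k] MvPolynomial (Fin n) k :=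
  aeval (Fin.cases 1 X)

lemma deh_monomial (β : Fin (n + 1) →₀ ℕ) (c : k) :
    deh (monomial β c) = monomial (Finsupp.tail β) c := by
  rw [deh, aeval_monomial, monomial_eq]
  congr 1
  rw [Finsupp.prod_fintype _ _ (fun i => pow_zero _),
    Finsupp.prod_fintype _ _ (fun i => pow_zero _), Fin.prod_univ_succ]
  simp only [Fin.cases_zero, one_pow, one_mul]
  refine Finset.prod_congr rfl (fun j _ => ?_)
  rw [Fin.cases_succ, Finsupp.tail_apply]

lemma deh_homAt (e : ℕ) (f : MvPolynomial (Fin n) k) : deh (homAt e f) = f := by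
  rw [homAt, map_sum]
  refine Eq.trans (Finset.sum_congr rfl fun α hα => ?_) (support_sum_monomial_coeff f)
  rw [deh_monomial, tail_mlift]

lemma coeff_deh_of_whomog {e : ℕ} {h : MvPolynomial (Fin (n + 1)) k}
    (hh : WHomog dwt ((e : ℕ) : ℤ) h) (α : Fin n →₀ ℕ) :
    coeff α (deh h) = coeff (mlift e α) h := by
  classical
  conv_lhs => rw [← support_sum_monomial_coeff h, map_sum]
  rw [coeff_sum]
  have : ∀ β ∈ h.support, coeff α (deh (monomial β (coeff β h)))
      = if β = mlift e α then coeff β h else 0 := by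
    intro β hβ
    rw [deh_monomial, coeff_monomial]
    have hdg : degN β = e := by
      have := hh β hβ
      rw [dwt] at this
      exact_mod_cast this
    congr 1
    apply propext
    constructor
    · intro hc; rw [← hc]; exact (mlift_tail_eq hdg).symm
    · intro hc; rw [hc, tail_mlift]
  rw [Finset.sum_congr rfl this, Finset.sum_ite_eq' h.support (mlift e α)
    (fun β => coeff β h)]
  by_cases hm : mlift e α ∈ h.support
  · rw [if_pos hm]
  · rw [if_neg hm, (mem_support_iff.not_left.mp hm)]

lemma deh_support_bound {e : ℕ} {h : MvPolynomial (Fin (n + 1)) k}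
    (hh : WHomog dwt ((e : ℕ) : ℤ) h) :
    ∀ α ∈ (deh h).support, degN α ≤ e := by
  intro α hα
  rw [mem_support_iff, coeff_deh_of_whomog hh] at hα
  have hs : mlift e α ∈ h.support := mem_support_iff.mpr hα
  have hdg : degN (mlift e α) = e := by
    have := hh _ hs
    rw [dwt] at this
    exact_mod_cast this
  rw [mlift, degN_cons] at hdg
  omega

lemma homAt_deh {e : ℕ} {h : MvPolynomial (Fin (n + 1)) k}
    (hh : WHomog dwt ((e : ℕ) : ℤ) h) : homAt e (deh h) = h := by
  ext β
  rw [coeff_homAt (deh_support_bound hh)]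
  by_cases hdb : degN β = e
  · rw [if_pos hdb, coeff_deh_of_whomog hh, mlift_tail_eq hdb]
  · rw [if_neg hdb]
    by_cases hc : coeff β h = 0
    · rw [hc]
    · exfalso
      apply hdb
      have := hh β (mem_support_iff.mpr hc)
      rw [dwt] at this
      exact_mod_cast this

end C
section D

variable {k : Type} [Field k] {m : ℕ}

/-- the finite set of exponent vectors of total degree `e` -/
noncomputable def monsFin (e : ℕ) : Finset (Fin m →₀ ℕ) :=
  (Finset.Iic (Finsupp.equivFunOnFinite.symm (fun _ => e))).filter (fun β => degN β = e)

lemma mem_monsFin {e : ℕ} {β : Fin m →₀ ℕ} (h : degN β = e) : β ∈ monsFin e := by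
  classical
  rw [monsFin, Finset.mem_filter]
  refine ⟨Finset.mem_Iic.mpr ?_, h⟩
  rw [Finsupp.le_def]
  intro i
  have : β i ≤ degN β := Finset.single_le_sum (f := fun j => β j)
    (fun j _ => Nat.zero_le _) (Finset.mem_univ i)
  simpa using this.trans h.le

/-- polynomials that are degree-homogeneous of degree `e` -/
noncomputable def homogSubmodule (e : ℤ) : Submodule k (MvPolynomial (Fin m) k) where
  carrier := {f | WHomog dwt e f}
  add_mem' := by
    intro f g hf hg γ hγ
    rcases Finset.mem_union.mp (Finsupp.support_add hγ) with h | h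
    · exact hf γ h
    · exact hg γ h
  zero_mem' := by intro γ hγ; simp at hγ
  smul_mem' := by
    intro c f hf γ hγ
    exact hf γ (MvPolynomial.support_smul hγ)

lemma mem_homogSubmodule (e : ℤ) (f : MvPolynomial (Fin m) k) :
    f ∈ (homogSubmodule e : Submodule k (MvPolynomial (Fin m) k)) ↔ WHomog dwt e f :=
  Iff.rfl

noncomputable instance homog_findim (e : ℕ) :
    FiniteDimensional k ↥(homogSubmodule ((e : ℕ) : ℤ) : Submodule k (MvPolynomial (Fin m) k)) := by
  classical
  set H := (homogSubmodule ((e : ℕ) : ℤ) : Submodule k (MvPolynomial (Fin m) k))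
  let Θ : H →ₗ[k] (↥(monsFin e : Finset (Fin m →₀ ℕ)) → k) :=
    { toFun := fun g μ => coeff μ.1 g.1
      map_add' := by intro g h; ext μ; simp
      map_smul' := by intro c g; ext μ; simp }
  have hinj : Function.Injective Θ := by
    intro g h hgh
    apply Subtype.ext
    ext γ
    by_cases hd : degN γ = e
    · have := congrFun hgh ⟨γ, mem_monsFin hd⟩
      simpa [Θ] using this
    · have h1 : coeff γ g.1 = 0 := by
        by_contra hc
        have h3 := g.2 γ (mem_support_iff.mpr hc)
        rw [show dwt γ = ((degN γ : ℕ) : ℤ) from rfl] at h3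
        exact hd (by exact_mod_cast h3)
      have h2 : coeff γ h.1 = 0 := by
        by_contra hc
        have h3 := h.2 γ (mem_support_iff.mpr hc)
        rw [show dwt γ = ((degN γ : ℕ) : ℤ) from rfl] at h3
        exact hd (by exact_mod_cast h3)
      rw [h1, h2]
  exact FiniteDimensional.of_injective Θ hinj

/-- degree-`e` part of an ideal, as a `k`-subspace -/
noncomputable def DI (T : Ideal (MvPolynomial (Fin m) k)) (e : ℕ) :
    Submodule k (MvPolynomial (Fin m) k) :=
  Submodule.restrictScalars k T ⊓ homogSubmodule ((e : ℕ) : ℤ)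

noncomputable instance DI_findim (T : Ideal (MvPolynomial (Fin m) k)) (e : ℕ) :
    FiniteDimensional k ↥(DI T e) :=
  Submodule.finiteDimensional_of_le inf_le_right

lemma degN_of_whomog {e : ℕ} {g : MvPolynomial (Fin m) k} (h : WHomog dwt ((e : ℕ) : ℤ) g)
    {γ : Fin m →₀ ℕ} (hγ : γ ∈ g.support) : degN γ = e := by
  have h3 := h γ hγ
  rw [show dwt γ = ((degN γ : ℕ) : ℤ) from rfl] at h3
  exact_mod_cast h3

variable {G : Type} [AddCommGroup G] [LinearOrder G] [IsOrderedAddMonoid G] [DecidableEq G]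
variable (W : (Fin m →₀ ℕ) → G)

/-- monomial comparison: first by weight, then lexicographically -/
noncomputable def kappa : (Fin m →₀ ℕ) → Lex (G × Lex (Fin m →₀ ℕ)) :=
  fun β => toLex (W β, toLex β)

lemma kappa_inj {β γ : Fin m →₀ ℕ} (h : kappa W β = kappa W γ) : β = γ := by
  have h2 : (W β, toLex β) = (W γ, toLex γ) := congrArg ofLex h
  exact toLex.injective (congrArg Prod.snd h2)

lemma kappa_lt_of_wlt {β γ : Fin m →₀ ℕ} (h : W β < W γ) : kappa W β < kappa W γ :=
  Prod.Lex.lt_iff.mpr (Or.inl h)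

lemma initialForm_zero (le : (Fin m →₀ ℕ) → (Fin m →₀ ℕ) → Prop) :
    initialForm le (0 : MvPolynomial (Fin m) k) = 0 := by
  simp [initialForm]

/-- leading monomial specification -/
def IsLM (g : MvPolynomial (Fin m) k) (μ : Fin m →₀ ℕ) : Prop :=
  μ ∈ (initialForm (wle W) g).support ∧
    ∀ γ ∈ (initialForm (wle W) g).support, kappa W μ ≤ kappa W γ

lemma exists_isLM {g : MvPolynomial (Fin m) k} (hg : g ≠ 0) : ∃ μ, IsLM W g μ := by
  obtain ⟨q, hq⟩ := exists_isMinWt W hg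
  have h0 := initialForm_ne_zero W hq hg
  obtain ⟨μ, hμ, hmin⟩ := Finset.exists_min_image _ (kappa W)
    (MvPolynomial.support_nonempty.mpr h0)
  exact ⟨μ, hμ, hmin⟩

lemma isLM_ne_zero {g : MvPolynomial (Fin m) k} {μ : Fin m →₀ ℕ} (h : IsLM W g μ) :
    g ≠ 0 := by
  intro hc
  subst hc
  rw [IsLM, initialForm_zero] at h
  simp at h

lemma isLM_mem_support {g : MvPolynomial (Fin m) k} {μ : Fin m →₀ ℕ} (h : IsLM W g μ) :
    μ ∈ g.support :=
  support_initialForm_subset (wle W) g h.1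

lemma isLM_coeff_ne {g : MvPolynomial (Fin m) k} {μ : Fin m →₀ ℕ} (h : IsLM W g μ) :
    coeff μ g ≠ 0 :=
  mem_support_iff.mp (isLM_mem_support W h)

lemma isLM_lt {g : MvPolynomial (Fin m) k} {μ : Fin m →₀ ℕ} (h : IsLM W g μ) :
    ∀ γ ∈ g.support, γ ≠ μ → kappa W μ < kappa W γ := by
  have hg := isLM_ne_zero W h
  obtain ⟨q, hq⟩ := exists_isMinWt W hg
  have hsupp : (initialForm (wle W) g).support = g.support.filter (fun γ => W γ = q) := by
    rw [initialForm_eq_wcomp W hq, support_wcomp]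
  have hWμ : W μ = q := by
    have h1 := h.1
    rw [hsupp, Finset.mem_filter] at h1
    exact h1.2
  intro γ hγ hne
  rcases eq_or_lt_of_le (hq.2 γ hγ) with heq | hlt
  · have hγin : γ ∈ (initialForm (wle W) g).support := by
      rw [hsupp, Finset.mem_filter]; exact ⟨hγ, heq.symm⟩
    exact lt_of_le_of_ne (h.2 γ hγin) (fun hc => hne (kappa_inj W hc).symm)
  · exact kappa_lt_of_wlt W (by rw [hWμ]; exact hlt)

lemma isLM_unique {g : MvPolynomial (Fin m) k} {μ μ' : Fin m →₀ ℕ}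
    (h : IsLM W g μ) (h' : IsLM W g μ') : μ = μ' :=
  kappa_inj W (le_antisymm (h.2 μ' h'.1) (h'.2 μ h.1))

lemma isLM_congr {g f : MvPolynomial (Fin m) k}
    (hfg : initialForm (wle W) g = initialForm (wle W) f) (μ : Fin m →₀ ℕ) :
    IsLM W g μ ↔ IsLM W f μ := by
  unfold IsLM
  rw [hfg]

/-- the set of leading monomials of a space of polynomials -/
def LMs (T : Submodule k (MvPolynomial (Fin m) k)) : Set (Fin m →₀ ℕ) :=
  {μ | ∃ g ∈ T, IsLM W g μ}

/-- a choice of an element of `T` with leading monomial `μ` -/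
noncomputable def pickLM (T : Submodule k (MvPolynomial (Fin m) k)) :
    (Fin m →₀ ℕ) → MvPolynomial (Fin m) k :=
  fun μ => if h : ∃ g, g ∈ T ∧ IsLM W g μ then h.choose else 0

lemma pickLM_spec {T : Submodule k (MvPolynomial (Fin m) k)} {μ : Fin m →₀ ℕ}
    (h : μ ∈ LMs W T) : pickLM W T μ ∈ T ∧ IsLM W (pickLM W T μ) μ := by
  obtain ⟨g, hg, hLM⟩ := h
  have he : ∃ g, g ∈ T ∧ IsLM W g μ := ⟨g, hg, hLM⟩
  rw [pickLM, dif_pos he]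
  exact he.choose_spec

theorem finrank_eq_card_LMs (T : Submodule k (MvPolynomial (Fin m) k)) (e : ℕ)
    (hT : T ≤ homogSubmodule ((e : ℕ) : ℤ)) [FiniteDimensional k T] :
    Module.finrank k ↥T = ((monsFin e).filter (fun μ => μ ∈ LMs W T)).card := by
  classical
  set SF : Finset (Fin m →₀ ℕ) := (monsFin e).filter (fun μ => μ ∈ LMs W T) with hSF
  set v : (Fin m →₀ ℕ) → MvPolynomial (Fin m) k := pickLM W T with hv
  have hvspec : ∀ μ ∈ SF, v μ ∈ T ∧ IsLM W (v μ) μ := by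
    intro μ hμ
    exact pickLM_spec W (Finset.mem_filter.mp hμ).2
  -- linear independence
  have hLI : LinearIndependent k (fun μ : ↥SF => v μ.1) := by
    rw [Fintype.linearIndependent_iff]
    intro c hc
    by_contra hcon
    push_neg at hcon
    obtain ⟨i1, hi1⟩ := hcon
    have hs : (Finset.univ.filter (fun i : ↥SF => c i ≠ 0)).Nonempty :=
      ⟨i1, Finset.mem_filter.mpr ⟨Finset.mem_univ _, hi1⟩⟩
    obtain ⟨i0, hi0s, hi0min⟩ := Finset.exists_min_image _ (fun i : ↥SF => kappa W i.1) hs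
    have hci0 : c i0 ≠ 0 := (Finset.mem_filter.mp hi0s).2
    have hvi0 := hvspec i0.1 i0.2
    have hco : coeff i0.1 (∑ i : ↥SF, c i • v i.1) = c i0 * coeff i0.1 (v i0.1) := by
      rw [coeff_sum]
      rw [Finset.sum_eq_single i0]
      · rw [MvPolynomial.coeff_smul]; rfl
      · intro i _ hii0
        by_cases hc0 : c i = 0
        · simp [hc0]
        have hvi := hvspec i.1 i.2
        have hμ0 : coeff i0.1 (v i.1) = 0 := by
          by_contra hcc
          have hmem : i0.1 ∈ (v i.1).support := mem_support_iff.mpr hcc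
          have hne : (i0.1 : Fin m →₀ ℕ) ≠ i.1 := fun hval => hii0 (Subtype.ext hval.symm)
          have hlt := isLM_lt W hvi.2 i0.1 hmem hne
          have hle := hi0min i (Finset.mem_filter.mpr ⟨Finset.mem_univ _, hc0⟩)
          exact absurd (lt_of_le_of_lt hle hlt) (lt_irrefl _)
        rw [MvPolynomial.coeff_smul, hμ0, smul_eq_mul, mul_zero]
      · intro hni; exact absurd (Finset.mem_univ i0) hni
    rw [hc, coeff_zero] at hco
    exact hci0 (by
      rcases mul_eq_zero.mp hco.symm with h | h
      · exact h
      · exact absurd h (isLM_coeff_ne W hvi0.2))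
  -- spanning
  have hspan : ∀ g ∈ T, g ∈ Submodule.span k (v '' ↑SF) := by
    have haux : ∀ N : ℕ, ∀ g ∈ T,
        (∀ μ, IsLM W g μ → ((monsFin e).filter (fun ν => kappa W μ ≤ kappa W ν)).card ≤ N) →
        g ∈ Submodule.span k (v '' ↑SF) := by
      intro N
      induction N with
      | zero =>
        intro g hg hb
        by_cases hg0 : g = 0
        · rw [hg0]; exact Submodule.zero_mem _
        obtain ⟨μ, hLM⟩ := exists_isLM W hg0
        exfalso
        have hμe : μ ∈ monsFin (m := m) e :=
          mem_monsFin (degN_of_whomog (hT hg) (isLM_mem_support W hLM))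
        have : μ ∈ (monsFin e).filter (fun ν => kappa W μ ≤ kappa W ν) :=
          Finset.mem_filter.mpr ⟨hμe, le_refl _⟩
        have hpos := Finset.card_pos.mpr ⟨μ, this⟩
        have hb0 := hb μ hLM
        omega
      | succ N ih =>
        intro g hg hb
        by_cases hg0 : g = 0
        · rw [hg0]; exact Submodule.zero_mem _
        obtain ⟨μ, hLM⟩ := exists_isLM W hg0
        have hμT : μ ∈ LMs W T := ⟨g, hg, hLM⟩
        have hμSF : μ ∈ SF := Finset.mem_filter.mpr
          ⟨mem_monsFin (degN_of_whomog (hT hg) (isLM_mem_support W hLM)), hμT⟩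
        have hw := hvspec μ hμSF
        have hcw : coeff μ (v μ) ≠ 0 := isLM_coeff_ne W hw.2
        set a := coeff μ g / coeff μ (v μ) with ha
        set g' := g - a • v μ with hg'def
        have hg'T : g' ∈ T := T.sub_mem hg (T.smul_mem _ hw.1)
        have hcoeffμ : coeff μ g' = 0 := by
          rw [hg'def, MvPolynomial.coeff_sub, MvPolynomial.coeff_smul, ha, smul_eq_mul,
            div_mul_cancel₀ _ hcw, sub_self]
        have hsupp' : ∀ γ ∈ g'.support, kappa W μ < kappa W γ := by
          intro γ hγ
          have hγμ : γ ≠ μ := by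
            intro hcq; rw [hcq] at hγ; exact mem_support_iff.mp hγ hcoeffμ
          have hγ2 : γ ∈ g.support ∪ (a • v μ).support := by
            have h3 : γ ∈ g.support ∪ (-(a • v μ)).support := by
              apply MvPolynomial.support_add (p := g) (q := -(a • v μ))
              rw [hg'def, sub_eq_add_neg] at hγ
              exact hγ
            simpa using h3
          rcases Finset.mem_union.mp hγ2 with h | h
          · exact isLM_lt W hLM γ h hγμ
          · exact isLM_lt W hw.2 γ (MvPolynomial.support_smul h) hγμ
        by_cases hg'0 : g' = 0
        · have : g = a • v μ := by
            rw [← sub_eq_zero]; exact hg'0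
          rw [this]
          exact Submodule.smul_mem _ _ (Submodule.subset_span ⟨μ, hμSF, rfl⟩)
        · obtain ⟨μ', hLM'⟩ := exists_isLM W hg'0
          have hlt : kappa W μ < kappa W μ' := hsupp' μ' (isLM_mem_support W hLM')
          have hcard : ((monsFin e).filter (fun ν => kappa W μ' ≤ kappa W ν)).card ≤ N := by
            have hsub : (monsFin (m := m) e).filter (fun ν => kappa W μ' ≤ kappa W ν) ⊂
                (monsFin e).filter (fun ν => kappa W μ ≤ kappa W ν) := by
              constructor
              · intro ν hν
                rw [Finset.mem_filter] at hν ⊢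
                exact ⟨hν.1, (le_of_lt hlt).trans hν.2⟩
              · intro hcon
                have hμin : μ ∈ (monsFin (m := m) e).filter (fun ν => kappa W μ ≤ kappa W ν) :=
                  Finset.mem_filter.mpr
                    ⟨mem_monsFin (degN_of_whomog (hT hg) (isLM_mem_support W hLM)), le_refl _⟩
                have := hcon hμin
                rw [Finset.mem_filter] at this
                exact absurd (lt_of_le_of_lt this.2 hlt) (lt_irrefl _)
            have h1 := Finset.card_lt_card hsub
            have h2 := hb μ hLM
            omega
          have hg'span := ih g' hg'T (fun ν hν => by
            rw [isLM_unique W hν hLM']; exact hcard)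
          have hgeq : g = g' + a • v μ := by rw [hg'def]; abel
          rw [hgeq]
          exact Submodule.add_mem _ hg'span
            (Submodule.smul_mem _ _ (Submodule.subset_span ⟨μ, hμSF, rfl⟩))
    intro g hg
    exact haux (monsFin e).card g hg (fun μ _ => Finset.card_filter_le _ _)
  have hTspan : T = Submodule.span k (v '' ↑SF) := by
    apply le_antisymm
    · intro g hg; exact hspan g hg
    · rw [Submodule.span_le]
      rintro _ ⟨μ, hμ, rfl⟩
      exact (hvspec μ hμ).1
  have himg : v '' ↑SF = Set.range (fun μ : ↥SF => v μ.1) := by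
    rw [Set.image_eq_range]
    rfl
  rw [hTspan, himg, finrank_span_eq_card hLI, Fintype.card_coe]

end D
section E

variable {k : Type} [Field k] {m : ℕ}

/-- leading monomials of the degree-`e` part of the initial ideal match those of the ideal -/
theorem LMs_initialIdeal {G : Type} [AddCommGroup G] [LinearOrder G] [IsOrderedAddMonoid G] [DecidableEq G]
    (W : (Fin m →₀ ℕ) → G) (J : Ideal (MvPolynomial (Fin m) k))
    (hW : ∀ a b : Fin m →₀ ℕ, W (a + b) = W a + W b)
    (hJ : ∀ h ∈ J, ∀ d : ℤ, wcomp dwt d h ∈ J) (e : ℕ) :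
    LMs W (DI (initialIdeal (wle W) J) e) = LMs W (DI J e) := by
  apply Set.eq_of_subset_of_subset
  · rintro μ ⟨g, hgDI, hLM⟩
    rw [DI, Submodule.mem_inf] at hgDI
    obtain ⟨hgA, hghom⟩ := hgDI
    have hg0 : g ≠ 0 := isLM_ne_zero W hLM
    obtain ⟨q, hq⟩ := exists_isMinWt W hg0
    have hinF : wcomp W q g = initialForm (wle W) g := (initialForm_eq_wcomp W hq).symm
    have hgood := goodAt_of_mem_initialIdeal W hW hgA q
    rw [hinF] at hgood
    rcases hgood with h0 | ⟨f, hfJ, hf0, _hfm, hEq⟩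
    · exact absurd h0 (initialForm_ne_zero W hq hg0)
    -- initialForm g = initialForm f; truncate f to degree e
    have hinFhom : WHomog dwt ((e : ℕ) : ℤ) (initialForm (wle W) g) :=
      fun γ hγ => hghom γ (support_initialForm_subset _ _ hγ)
    have hne : wcomp dwt ((e : ℕ) : ℤ) (initialForm (wle W) f) ≠ 0 := by
      rw [← hEq, wcomp_of_whomog dwt hinFhom]
      exact initialForm_ne_zero W hq hg0
    obtain ⟨hfe0, hEq2⟩ := wcomp_initialForm_cross W dwt hf0 hne
    have hfeJ : wcomp dwt ((e : ℕ) : ℤ) f ∈ J := hJ f hfJ _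
    refine ⟨wcomp dwt ((e : ℕ) : ℤ) f, ?_, ?_⟩
    · rw [DI, Submodule.mem_inf]
      exact ⟨hfeJ, whomog_wcomp dwt _ f⟩
    · refine (isLM_congr W ?_ μ).mp hLM
      rw [← hEq2, ← hEq, wcomp_of_whomog dwt hinFhom]
  · rintro μ ⟨f, hfDI, hLM⟩
    rw [DI, Submodule.mem_inf] at hfDI
    obtain ⟨hfJ, hfhom⟩ := hfDI
    have hf0 : f ≠ 0 := isLM_ne_zero W hLM
    obtain ⟨q, hq⟩ := exists_isMinWt W hf0
    set g := initialForm (wle W) f with hgdef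
    have hg0 : g ≠ 0 := initialForm_ne_zero W hq hf0
    refine ⟨g, ?_, ?_⟩
    · rw [DI, Submodule.mem_inf]
      constructor
      · exact Ideal.subset_span ⟨f, hfJ, hf0, rfl⟩
      · exact fun γ hγ => hfhom γ (support_initialForm_subset _ _ hγ)
    · refine (isLM_congr W ?_ μ).mpr hLM
      rw [hgdef]
      exact initialForm_of_whomog W (whomog_initialForm W hq) hg0

/-- initial ideals w.r.t. components-closure are themselves components-closed -/
lemma initialIdeal_comp_closed {G : Type} [AddCommGroup G] [LinearOrder G] [IsOrderedAddMonoid G] [DecidableEq G]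
    (W : (Fin m →₀ ℕ) → G) (J : Ideal (MvPolynomial (Fin m) k))
    (hJ : ∀ h ∈ J, ∀ d : ℤ, wcomp dwt d h ∈ J) :
    ∀ g ∈ initialIdeal (wle W) J, ∀ d : ℤ,
      wcomp dwt d g ∈ initialIdeal (wle W) J := by
  intro g hg d
  rw [initialIdeal] at hg ⊢
  refine wcomp_mem_span dwt dwt_add ?_ hg d
  rintro s ⟨f, hfJ, hf0, rfl⟩ q
  by_cases h0 : wcomp dwt q (initialForm (wle W) f) = 0
  · rw [h0]; exact Ideal.zero_mem _
  obtain ⟨hfq0, hEq⟩ := wcomp_initialForm_cross W dwt hf0 h0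
  rw [hEq]
  exact Ideal.subset_span ⟨wcomp dwt q f, hJ f hfJ q, hfq0, rfl⟩

/-- **upstairs comparison**: for a degree-components-closed ideal, an inclusion of
initial ideals is an equality -/
theorem initialIdeal_eq_of_le {Ga Gb : Type}
    [AddCommGroup Ga] [LinearOrder Ga] [IsOrderedAddMonoid Ga] [DecidableEq Ga]
    [AddCommGroup Gb] [LinearOrder Gb] [IsOrderedAddMonoid Gb] [DecidableEq Gb]
    (Wa : (Fin m →₀ ℕ) → Ga) (Wb : (Fin m →₀ ℕ) → Gb)
    (hWa : ∀ a b : Fin m →₀ ℕ, Wa (a + b) = Wa a + Wa b)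
    (hWb : ∀ a b : Fin m →₀ ℕ, Wb (a + b) = Wb a + Wb b)
    (J : Ideal (MvPolynomial (Fin m) k))
    (hJ : ∀ h ∈ J, ∀ d : ℤ, wcomp dwt d h ∈ J)
    (hsub : initialIdeal (wle Wa) J ≤ initialIdeal (wle Wb) J) :
    initialIdeal (wle Wa) J = initialIdeal (wle Wb) J := by
  classical
  set A := initialIdeal (wle Wa) J with hA
  set B := initialIdeal (wle Wb) J with hB
  have hDI : ∀ e : ℕ, DI A e = DI B e := by
    intro e
    have hle : DI A e ≤ DI B e := by
      intro x hx
      rw [DI, Submodule.mem_inf] at hx ⊢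
      exact ⟨hsub hx.1, hx.2⟩
    have hrkA : Module.finrank k ↥(DI A e) = Module.finrank k ↥(DI J e) := by
      rw [finrank_eq_card_LMs Wa (DI A e) e inf_le_right,
        finrank_eq_card_LMs Wa (DI J e) e inf_le_right,
        LMs_initialIdeal Wa J hWa hJ e]
    have hrkB : Module.finrank k ↥(DI B e) = Module.finrank k ↥(DI J e) := by
      rw [finrank_eq_card_LMs Wb (DI B e) e inf_le_right,
        finrank_eq_card_LMs Wb (DI J e) e inf_le_right,
        LMs_initialIdeal Wb J hWb hJ e]
    exact Submodule.eq_of_le_of_finrank_le hle (by rw [hrkA, hrkB])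
  have hBA : B ≤ A := by
    intro g hg
    rw [← sum_wcomp dwt g]
    refine Ideal.sum_mem _ (fun d hd => ?_)
    obtain ⟨γ, _, hγd⟩ := Finset.mem_image.mp hd
    have he : d = ((degN γ : ℕ) : ℤ) := hγd.symm
    have hmem : wcomp dwt d g ∈ DI B (degN γ) := by
      rw [DI, Submodule.mem_inf]
      refine ⟨initialIdeal_comp_closed Wb J hJ g hg d, ?_⟩
      rw [he]
      exact whomog_wcomp dwt _ g
    rw [← hDI (degN γ), DI, Submodule.mem_inf] at hmem
    exact hmem.1
  exact le_antisymm hsub hBA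

end E
section F

variable {k : Type} [Field k] {n : ℕ}

/-- generators of the homogenized ideal -/
def homgen (I : Ideal (MvPolynomial (Fin n) k)) : Set (MvPolynomial (Fin (n + 1)) k) :=
  {h | ∃ f, f ∈ I ∧ f ≠ 0 ∧ h = homAt (f.support.sup degN) f}

/-- the homogenization of an ideal -/
noncomputable def homIdeal (I : Ideal (MvPolynomial (Fin n) k)) :
    Ideal (MvPolynomial (Fin (n + 1)) k) :=
  Ideal.span (homgen I)

lemma sup_deg_bound (f : MvPolynomial (Fin n) k) :
    ∀ α ∈ f.support, degN α ≤ f.support.sup degN :=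
  fun _ hα => Finset.le_sup hα

lemma homIdeal_comp (I : Ideal (MvPolynomial (Fin n) k)) :
    ∀ h ∈ homIdeal I, ∀ d : ℤ, wcomp dwt d h ∈ homIdeal I := by
  intro h hh d
  rw [homIdeal] at hh ⊢
  refine wcomp_mem_span dwt dwt_add ?_ hh d
  rintro s ⟨f, hfI, hf0, rfl⟩ q
  have hhom := whomog_homAt (sup_deg_bound f)
  by_cases hq : q = ((f.support.sup degN : ℕ) : ℤ)
  · rw [hq, wcomp_of_whomog dwt hhom]
    exact Ideal.subset_span ⟨f, hfI, hf0, rfl⟩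
  · rw [wcomp_of_whomog_ne dwt hhom hq]
    exact Ideal.zero_mem _

lemma deh_mem_of_mem_homIdeal {I : Ideal (MvPolynomial (Fin n) k)}
    {g : MvPolynomial (Fin (n + 1)) k} (hg : g ∈ homIdeal I) : deh g ∈ I := by
  have hle : Ideal.map (deh (k := k) (n := n)) (homIdeal I) ≤ I := by
    rw [homIdeal, Ideal.map_span, Ideal.span_le]
    rintro _ ⟨h, ⟨f, hfI, hf0, rfl⟩, rfl⟩
    rw [deh_homAt]
    exact hfI
  exact hle (Ideal.mem_map_of_mem _ hg)

lemma homAt_zero (e : ℕ) : homAt e (0 : MvPolynomial (Fin n) k) = 0 := by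
  simp [homAt]

section Fw

variable {G : Type} [AddCommGroup G] [LinearOrder G] [IsOrderedAddMonoid G] [DecidableEq G]
variable (W : (Fin n →₀ ℕ) → G)

lemma deh_initialForm_mem {I : Ideal (MvPolynomial (Fin n) k)}
    {g : MvPolynomial (Fin (n + 1)) k} (hg : g ∈ homIdeal I) (hg0 : g ≠ 0) :
    deh (initialForm (wle (wext W)) g) ∈ initialIdeal (wle W) I := by
  set p := initialForm (wle (wext W)) g with hp
  rw [← sum_wcomp dwt p, map_sum]
  refine Ideal.sum_mem _ (fun d hd => ?_)
  by_cases h0 : wcomp dwt d p = 0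
  · rw [h0, map_zero]; exact Ideal.zero_mem _
  obtain ⟨hgd0, hEq⟩ := wcomp_initialForm_cross (wext W) dwt hg0 h0
  set gd := wcomp dwt d g with hgd
  have hgdJ : gd ∈ homIdeal I := homIdeal_comp I g hg d
  have hgdhom' : WHomog dwt d gd := whomog_wcomp dwt d g
  obtain ⟨γ, hγ⟩ := MvPolynomial.support_nonempty.mpr hgd0
  have hdeq : d = ((degN γ : ℕ) : ℤ) := (hgdhom' γ hγ).symm
  set e := degN γ with he
  have hgdhom : WHomog dwt ((e : ℕ) : ℤ) gd := by rw [← hdeq]; exact hgdhom'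
  have hfI : deh gd ∈ I := deh_mem_of_mem_homIdeal hgdJ
  have hfne : deh gd ≠ 0 := by
    intro hc
    apply hgd0
    rw [← homAt_deh hgdhom, hc, homAt_zero]
  have hstr : homAt e (deh gd) = gd := homAt_deh hgdhom
  rw [hEq, ← hstr, initialForm_homAt W (deh_support_bound hgdhom) hfne, deh_homAt]
  exact Ideal.subset_span ⟨deh gd, hfI, hfne, rfl⟩

/-- dehomogenizing the initial ideal of the homogenization recovers the initial ideal -/
theorem map_deh_initialIdeal (I : Ideal (MvPolynomial (Fin n) k)) :
    Ideal.map (deh (k := k) (n := n)) (initialIdeal (wle (wext W)) (homIdeal I)) =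
      initialIdeal (wle W) I := by
  apply le_antisymm
  · rw [initialIdeal, Ideal.map_span, Ideal.span_le]
    rintro _ ⟨g', ⟨g, hgJ, hg0, rfl⟩, rfl⟩
    exact deh_initialForm_mem W hgJ hg0
  · rw [show initialIdeal (wle W) I =
        Ideal.span {g | ∃ f ∈ I, f ≠ 0 ∧ g = initialForm (wle W) f} from rfl,
      Ideal.span_le]
    rintro _ ⟨f, hfI, hf0, rfl⟩
    set e := f.support.sup degN with he
    have hbd := sup_deg_bound f
    have hgJ : homAt e f ∈ homIdeal I := Ideal.subset_span ⟨f, hfI, hf0, rfl⟩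
    have hg0 : homAt e f ≠ 0 := homAt_ne_zero hbd hf0
    have hkey : initialForm (wle W) f = deh (initialForm (wle (wext W)) (homAt e f)) := by
      rw [initialForm_homAt W hbd hf0, deh_homAt]
    rw [hkey]
    exact Ideal.mem_map_of_mem _ (Ideal.subset_span ⟨homAt e f, hgJ, hg0, rfl⟩)

end Fw
end F
section G

lemma lex_lt_char {r : ℕ} (x y : Fin r → ℚ) :
    toLex x < toLex y ↔ ∃ i, (∀ j, j < i → x j = y j) ∧ x i < y i :=
  Iff.rfl

lemma adaptStrict (r : ℕ) (F : Finset (Fin r → ℚ)) :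
    ∃ c : Fin r → ℚ, ∀ x ∈ F, ∀ y ∈ F,
      toLex x < toLex y → ∑ i, c i * x i < ∑ i, c i * y i := by
  classical
  induction r with
  | zero =>
    refine ⟨0, fun x _ y _ hxy => ?_⟩
    obtain ⟨i, _, _⟩ := (lex_lt_char x y).mp hxy
    exact i.elim0
  | succ r ih =>
    obtain ⟨c', hc'⟩ := ih (F.image (fun x => x ∘ Fin.succ))
    set T : (Fin (r + 1) → ℚ) → ℚ := fun x => ∑ j, c' j * x (Fin.succ j) with hT
    set E : Finset ℚ := ((F ×ˢ F).filter (fun p => p.1 0 < p.2 0)).image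
      (fun p => (p.2 0 - p.1 0) / (1 + |T p.1 - T p.2|)) with hE
    have hEpos : ∀ q ∈ E, 0 < q := by
      intro q hq
      obtain ⟨p, hp, rfl⟩ := Finset.mem_image.mp hq
      have h1 : p.1 0 < p.2 0 := (Finset.mem_filter.mp hp).2
      have h2 : (0 : ℚ) < 1 + |T p.1 - T p.2| := by positivity
      exact div_pos (by linarith) h2
    set ε : ℚ := if hEne : E.Nonempty then min (E.min' hEne) 1 else 1 with hεdef
    have hε0 : 0 < ε := by
      rw [hεdef]
      split_ifs with hEne
      · exact lt_min (hEpos _ (E.min'_mem hEne)) one_pos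
      · exact one_pos
    have hεbound : ∀ x ∈ F, ∀ y ∈ F, x 0 < y 0 → ε * (T x - T y) < y 0 - x 0 := by
      intro x hx y hy hxy0
      have hpair : (x, y) ∈ (F ×ˢ F).filter (fun p => p.1 0 < p.2 0) :=
        Finset.mem_filter.mpr ⟨Finset.mem_product.mpr ⟨hx, hy⟩, hxy0⟩
      have hqE : (y 0 - x 0) / (1 + |T x - T y|) ∈ E :=
        Finset.mem_image.mpr ⟨(x, y), hpair, rfl⟩
      have hEne : E.Nonempty := ⟨_, hqE⟩
      have hεle : ε ≤ (y 0 - x 0) / (1 + |T x - T y|) := by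
        rw [hεdef, dif_pos hEne]
        exact (min_le_left _ _).trans (E.min'_le _ hqE)
      have habs : (0 : ℚ) < 1 + |T x - T y| := by positivity
      have h1 : ε * (T x - T y) ≤ ε * |T x - T y| :=
        mul_le_mul_of_nonneg_left (le_abs_self _) hε0.le
      have h2 : ε * |T x - T y| < ε * (1 + |T x - T y|) :=
        mul_lt_mul_of_pos_left (by linarith) hε0
      have h3 : ε * (1 + |T x - T y|) ≤
          ((y 0 - x 0) / (1 + |T x - T y|)) * (1 + |T x - T y|) :=
        mul_le_mul_of_nonneg_right hεle habs.le
      have h4 : ((y 0 - x 0) / (1 + |T x - T y|)) * (1 + |T x - T y|) = y 0 - x 0 :=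
        div_mul_cancel₀ _ habs.ne'
      linarith
    refine ⟨Fin.cons 1 (fun j => ε * c' j), ?_⟩
    have hsum : ∀ z : Fin (r + 1) → ℚ,
        ∑ i, (Fin.cons 1 (fun j => ε * c' j) : Fin (r + 1) → ℚ) i * z i
          = z 0 + ε * T z := by
      intro z
      rw [Fin.sum_univ_succ, hT, Finset.mul_sum]
      simp only [Fin.cons_zero, Fin.cons_succ, one_mul]
      congr 1
      refine Finset.sum_congr rfl (fun j _ => ?_)
      ring
    intro x hx y hy hxy
    rw [hsum x, hsum y]
    obtain ⟨i, hpre, hilt⟩ := (lex_lt_char x y).mp hxy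
    rcases Fin.eq_zero_or_eq_succ i with hi0 | ⟨i', rfl⟩
    · subst hi0
      have := hεbound x hx y hy hilt
      linarith
    · have h0 : x 0 = y 0 := hpre 0 (Fin.succ_pos i')
      have htl : toLex (x ∘ Fin.succ) < toLex (y ∘ Fin.succ) :=
        (lex_lt_char _ _).mpr ⟨i', fun j hj => hpre j.succ (Fin.succ_lt_succ_iff.mpr hj),
          hilt⟩
      have hTlt : T x < T y := hc' _ (Finset.mem_image_of_mem _ hx) _
        (Finset.mem_image_of_mem _ hy) htl
      have := mul_lt_mul_of_pos_left hTlt hε0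
      linarith

lemma adaptLe (r : ℕ) (F : Finset (Fin r → ℚ)) :
    ∃ c : Fin r → ℚ, ∀ x ∈ F, ∀ y ∈ F,
      (toLex x ≤ toLex y ↔ ∑ i, c i * x i ≤ ∑ i, c i * y i) := by
  obtain ⟨c, hc⟩ := adaptStrict r F
  refine ⟨c, fun x hx y hy => ⟨fun h => ?_, fun h => ?_⟩⟩
  · rcases eq_or_lt_of_le h with heq | hlt
    · rw [show x = y from toLex.injective heq]
    · exact (hc x hx y hy hlt).le
  · by_contra hcon
    have hlt : toLex y < toLex x := lt_of_not_ge hcon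
    have := hc y hy x hx hlt
    linarith

/-- inside a Noetherian ring, a span equals the span of a finite subset -/
lemma exists_finset_span {R : Type} [CommRing R] [IsNoetherianRing R] (S : Set R) :
    ∃ T : Finset R, ↑T ⊆ S ∧ Ideal.span (↑T : Set R) = Ideal.span S := by
  classical
  obtain ⟨T0, hT0⟩ := (IsNoetherian.noetherian (Ideal.span S))
  have hmem : ∀ t ∈ T0, ∃ Tf : Finset R, ↑Tf ⊆ S ∧ t ∈ Ideal.span (↑Tf : Set R) := by
    intro t ht
    have : t ∈ Ideal.span S := by
      rw [← hT0]
      exact Submodule.subset_span ht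
    exact Submodule.mem_span_finite_of_mem_span this
  choose! Ft hFt1 hFt2 using hmem
  refine ⟨T0.biUnion Ft, ?_, ?_⟩
  · intro x hx
    obtain ⟨t, ht, hxt⟩ := Finset.mem_biUnion.mp hx
    exact hFt1 t ht hxt
  · apply le_antisymm
    · rw [Ideal.span_le]
      intro x hx
      obtain ⟨t, ht, hxt⟩ := Finset.mem_biUnion.mp hx
      exact Submodule.subset_span (hFt1 t ht hxt)
    · rw [← hT0]
      rw [show (Submodule.span R (↑T0 : Set R)) = Ideal.span (↑T0 : Set R) from rfl,
        Ideal.span_le]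
      intro t ht
      have h1 : (↑(Ft t) : Set R) ⊆ ↑(T0.biUnion Ft) := fun x hx =>
        Finset.mem_coe.mpr (Finset.mem_biUnion.mpr ⟨t, ht, hx⟩)
      exact Ideal.span_mono h1 (hFt2 t ht)

end G
section H

lemma initialForm_congr {k : Type} [Field k] {m : ℕ}
    (le1 le2 : (Fin m →₀ ℕ) → (Fin m →₀ ℕ) → Prop) (f : MvPolynomial (Fin m) k)
    (h : ∀ α ∈ f.support, ∀ β ∈ f.support, (le1 α β ↔ le2 α β)) :
    initialForm le1 f = initialForm le2 f := by
  classical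
  simp only [initialForm]
  apply Finset.sum_congr
  · ext γ
    simp only [Finset.mem_filter]
    constructor
    · rintro ⟨hγ, hall⟩
      exact ⟨hγ, fun β hβ => (h γ hγ β hβ).mp (hall β hβ)⟩
    · rintro ⟨hγ, hall⟩
      exact ⟨hγ, fun β hβ => (h γ hγ β hβ).mpr (hall β hβ)⟩
  · intro γ _
    rfl

lemma mwt_add {n r : ℕ} (M : Matrix (Fin r) (Fin n) ℚ) (a b : Fin n →₀ ℕ) :
    mwt M (a + b) = mwt M a + mwt M b := by
  funext i
  simp only [mwt, Finsupp.add_apply, Pi.add_apply, Nat.cast_add, mul_add,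
    Finset.sum_add_distrib]

lemma uwt_add {n : ℕ} (u : Fin n → ℚ) (a b : Fin n →₀ ℕ) :
    uwt u (a + b) = uwt u a + uwt u b := by
  simp only [uwt, Finsupp.add_apply, Nat.cast_add, mul_add, Finset.sum_add_distrib]

theorem stmt_10' {k : Type} [Field k] {n r : ℕ}
    (I : Ideal (MvPolynomial (Fin n) k)) (M : Matrix (Fin r) (Fin n) ℚ) :
    ∃ u : Fin n → ℚ, initialIdeal (mLe M) I = initialIdeal (uLe u) I := by
  classical
  letI : DecidableEq (Lex (Fin r → ℚ)) := Classical.decEq _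
  set W1 : (Fin n →₀ ℕ) → Lex (Fin r → ℚ) := fun α => toLex (mwt M α) with hW1def
  have hW1 : ∀ a b : Fin n →₀ ℕ, W1 (a + b) = W1 a + W1 b := by
    intro a b
    show toLex (mwt M (a + b)) = toLex (mwt M a) + toLex (mwt M b)
    rw [mwt_add]
    rfl
  set J := homIdeal I with hJdef
  set SA : Set (MvPolynomial (Fin (n + 1)) k) :=
    {g' | ∃ g ∈ J, g ≠ 0 ∧ g' = initialForm (wle (wext W1)) g} with hSAdef
  obtain ⟨T, hTsub, hTspan⟩ := exists_finset_span SA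
  have hwit : ∀ t ∈ T, ∃ g, g ∈ J ∧ g ≠ 0 ∧ t = initialForm (wle (wext W1)) g :=
    fun t ht => hTsub ht
  choose! gw hgw1 hgw2 hgw3 using hwit
  set V : Finset (Fin (n + 1) →₀ ℕ) := T.biUnion (fun t => (gw t).support) with hVdef
  set F : Finset (Fin r → ℚ) := V.image (fun β => mwt M (Finsupp.tail β)) with hFdef
  obtain ⟨c, hc⟩ := adaptLe r F
  set u : Fin n → ℚ := fun j => ∑ i, c i * M i j with hu
  refine ⟨u, ?_⟩
  set W2 : (Fin n →₀ ℕ) → ℚ := uwt u with hW2def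
  have hW2 : ∀ a b : Fin n →₀ ℕ, W2 (a + b) = W2 a + W2 b := uwt_add u
  have hUc : ∀ α : Fin n →₀ ℕ, W2 α = ∑ i, c i * mwt M α i := by
    intro α
    show (∑ j, u j * (α j : ℚ)) = ∑ i, c i * mwt M α i
    have h1 : ∀ j, u j * (α j : ℚ) = ∑ i, c i * M i j * (α j : ℚ) := by
      intro j
      rw [hu, Finset.sum_mul]
    rw [Finset.sum_congr rfl (fun j _ => h1 j), Finset.sum_comm]
    refine Finset.sum_congr rfl (fun i _ => ?_)
    rw [mwt, Finset.mul_sum]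
    refine Finset.sum_congr rfl (fun j _ => ?_)
    ring
  have hgen : ∀ t ∈ T,
      initialForm (wle (wext W1)) (gw t) = initialForm (wle (wext W2)) (gw t) := by
    intro t ht
    apply initialForm_congr
    intro α hα β hβ
    have hαV : α ∈ V := Finset.mem_biUnion.mpr ⟨t, ht, hα⟩
    have hβV : β ∈ V := Finset.mem_biUnion.mpr ⟨t, ht, hβ⟩
    have h1 := hc (mwt M (Finsupp.tail α)) (Finset.mem_image_of_mem _ hαV)
      (mwt M (Finsupp.tail β)) (Finset.mem_image_of_mem _ hβV)
    show wext W1 α ≤ wext W1 β ↔ wext W2 α ≤ wext W2 β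
    have e1 : wext W2 α = ∑ i, c i * mwt M (Finsupp.tail α) i := hUc _
    have e2 : wext W2 β = ∑ i, c i * mwt M (Finsupp.tail β) i := hUc _
    rw [e1, e2]
    exact h1
  have hsub : initialIdeal (wle (wext W1)) J ≤ initialIdeal (wle (wext W2)) J := by
    rw [show initialIdeal (wle (wext W1)) J = Ideal.span SA from rfl, ← hTspan,
      Ideal.span_le]
    intro t ht
    rw [hgw3 t ht, hgen t ht]
    exact Ideal.subset_span ⟨gw t, hgw1 t ht, hgw2 t ht, rfl⟩
  have hequp := initialIdeal_eq_of_le (wext W1) (wext W2) (wext_add W1 hW1)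
    (wext_add W2 hW2) J (homIdeal_comp I) hsub
  have h1 := map_deh_initialIdeal W1 I
  have h2 := map_deh_initialIdeal W2 I
  rw [hJdef] at hequp
  rw [show mLe M = wle W1 from rfl, show uLe u = wle W2 from rfl, ← h1, ← h2, hequp]

end H

/-- **Every higher-rank initial ideal is a rank-one initial ideal**
(Proposition `prop-in-u-rep-in-w`): for any ideal `I` and any weighting matrix
`M ∈ ℚ^{r×n}` there is a single weight vector `u ∈ ℚ^n` with `in_M(I) = in_u(I)`. -/
theorem stmt_10 {k : Type} [Field k] {n r : ℕ}
    (I : Ideal (MvPolynomial (Fin n) k)) (M : Matrix (Fin r) (Fin n) ℚ) :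
    ∃ u : Fin n → ℚ, initialIdeal (mLe M) I = initialIdeal (uLe u) I :=
  stmt_10' I M
end

section
/- Let A be a commutative k-algebra that is an integral domain, ≻ a linear order on ℚ^r making it a linearly ordered abelian group, and v : A∖{0} → ℚ^r a valuation over k. Let b_1,…,b_n ∈ A∖{0}, let ϕ : k[x_1,…,x_n] → A be the k-algebra homomorphism with ϕ(x_i) = b_i, let I = ker(ϕ), and let M ∈ ℚ^{r×n} be the matrix whose i-th column is v(b_i). Then the initial ideal in_M(I) contains no monomial; that is, M lies in the rank-r tropical variety T^r(I). -/
open MvPolynomial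

set_option linter.unusedSectionVars false






namespace TropAux

variable {k : Type} [Field k] {n r : ℕ}

lemma coeff_filter_sum (p : (Fin n →₀ ℕ) → Prop) [DecidablePred p]
    (f : MvPolynomial (Fin n) k) (β : Fin n →₀ ℕ) :
    coeff β (∑ α ∈ f.support.filter p, monomial α (coeff α f))
      = if p β then coeff β f else 0 := by
  classical
  rw [coeff_sum]
  simp only [coeff_monomial]
  rw [Finset.sum_ite_eq']
  by_cases hp : p β <;> by_cases hs : β ∈ f.support <;>
    simp_all [Finset.mem_filter, MvPolynomial.notMem_support_iff.mp]

/-- weight-`e` homogeneous component -/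
noncomputable def wcomp (M : Matrix (Fin r) (Fin n) ℚ) (e : Fin r → ℚ)
    (f : MvPolynomial (Fin n) k) : MvPolynomial (Fin n) k :=
  letI := Classical.decPred fun α : Fin n →₀ ℕ => mwt M α = e
  ∑ α ∈ f.support.filter (fun α => mwt M α = e), monomial α (coeff α f)

open scoped Classical in
lemma coeff_wcomp (M : Matrix (Fin r) (Fin n) ℚ) (e : Fin r → ℚ)
    (f : MvPolynomial (Fin n) k) (β : Fin n →₀ ℕ) :
    coeff β (wcomp M e f) = if mwt M β = e then coeff β f else 0 := by
  rw [wcomp]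
  convert coeff_filter_sum (fun α => mwt M α = e) f β using 2
  congr!

open scoped Classical in
lemma coeff_initialForm (le : (Fin n →₀ ℕ) → (Fin n →₀ ℕ) → Prop)
    (f : MvPolynomial (Fin n) k) (β : Fin n →₀ ℕ) :
    coeff β (initialForm le f)
      = if (∀ γ ∈ f.support, le β γ) then coeff β f else 0 := by
  rw [initialForm]
  convert coeff_filter_sum (fun α => ∀ γ ∈ f.support, le α γ) f β using 2
  congr!

lemma mwt_add (M : Matrix (Fin r) (Fin n) ℚ) (α β : Fin n →₀ ℕ) :
    mwt M (α + β) = mwt M α + mwt M β := by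
  funext i
  simp only [mwt, Finsupp.add_apply, Pi.add_apply, ← Finset.sum_add_distrib]
  congr 1; funext j; push_cast; ring

lemma mem_support_wcomp (M : Matrix (Fin r) (Fin n) ℚ) (e : Fin r → ℚ)
    (f : MvPolynomial (Fin n) k) (β : Fin n →₀ ℕ) :
    β ∈ (wcomp M e f).support ↔ mwt M β = e ∧ β ∈ f.support := by
  classical
  simp only [mem_support_iff, coeff_wcomp]
  split_ifs with h <;> simp [h]

lemma wcomp_add (M : Matrix (Fin r) (Fin n) ℚ) (e : Fin r → ℚ)
    (f g : MvPolynomial (Fin n) k) :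
    wcomp M e (f + g) = wcomp M e f + wcomp M e g := by
  ext β
  simp only [coeff_wcomp, coeff_add]
  split_ifs <;> simp

lemma wcomp_of_support (M : Matrix (Fin r) (Fin n) ℚ) (e : Fin r → ℚ)
    {f : MvPolynomial (Fin n) k} (h : ∀ α ∈ f.support, mwt M α = e) :
    wcomp M e f = f := by
  ext β
  rw [coeff_wcomp]
  split_ifs with hβ
  · rfl
  · by_contra hc
    exact hβ (h β (mem_support_iff.2 fun h0 => hc h0.symm))

lemma wcomp_zero (M : Matrix (Fin r) (Fin n) ℚ) (e : Fin r → ℚ) :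
    wcomp M e (0 : MvPolynomial (Fin n) k) = 0 := by
  ext β; rw [coeff_wcomp]; simp

lemma wcomp_wcomp (M : Matrix (Fin r) (Fin n) ℚ) (d e : Fin r → ℚ)
    (f : MvPolynomial (Fin n) k) :
    wcomp M d (wcomp M e f) = if e = d then wcomp M e f else 0 := by
  split_ifs with h
  · subst h
    exact wcomp_of_support M e fun α hα => ((mem_support_wcomp M e f α).1 hα).1
  · ext β
    simp only [coeff_wcomp, coeff_zero]
    split_ifs with h1 h2 <;> simp_all

/-- `e` is the minimal weight of `f` and is attained. -/
def IsVal (ord : LinearOrder (Fin r → ℚ)) (M : Matrix (Fin r) (Fin n) ℚ)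
    (e : Fin r → ℚ) (f : MvPolynomial (Fin n) k) : Prop :=
  (∃ α ∈ f.support, mwt M α = e) ∧ ∀ β ∈ f.support, ord.le e (mwt M β)

lemma exists_isVal (ord : LinearOrder (Fin r → ℚ)) (M : Matrix (Fin r) (Fin n) ℚ)
    {f : MvPolynomial (Fin n) k} (hf : f ≠ 0) : ∃ e, IsVal ord M e f := by
  letI := ord
  obtain ⟨α₀, hα₀, hmin⟩ :=
    Finset.exists_min_image f.support (mwt M) (support_nonempty.2 hf)
  exact ⟨mwt M α₀, ⟨α₀, hα₀, rfl⟩, fun β hβ => hmin β hβ⟩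

lemma initialForm_eq_wcomp (ord : LinearOrder (Fin r → ℚ)) (M : Matrix (Fin r) (Fin n) ℚ)
    {e : Fin r → ℚ} {f : MvPolynomial (Fin n) k} (h : IsVal ord M e f) :
    initialForm (fun α β => ord.le (mwt M α) (mwt M β)) f = wcomp M e f := by
  obtain ⟨⟨α₀, hα₀, hα₀e⟩, hmin⟩ := h
  ext β
  rw [coeff_initialForm, coeff_wcomp]
  by_cases hs : β ∈ f.support
  · have hiff : (∀ γ ∈ f.support, ord.le (mwt M β) (mwt M γ)) ↔ mwt M β = e := by
      constructor
      · intro hall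
        exact @le_antisymm _ ord.toPartialOrder _ _ (hα₀e ▸ hall α₀ hα₀) (hmin β hs)
      · intro he γ hγ
        exact he ▸ hmin γ hγ
    simp only [hiff]
  · have hc : coeff β f = 0 := notMem_support_iff.mp hs
    simp [hc]

lemma isVal_unique (ord : LinearOrder (Fin r → ℚ)) (M : Matrix (Fin r) (Fin n) ℚ)
    {e e' : Fin r → ℚ} {f : MvPolynomial (Fin n) k}
    (h : IsVal ord M e f) (h' : IsVal ord M e' f) : e = e' := by
  obtain ⟨⟨α, hα, hαe⟩, hmin⟩ := h
  obtain ⟨⟨α', hα', hαe'⟩, hmin'⟩ := h'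
  exact @le_antisymm _ ord.toPartialOrder _ _ (hαe' ▸ hmin α' hα') (hαe ▸ hmin' α hα)

lemma initialForm_ne_zero (ord : LinearOrder (Fin r → ℚ)) (M : Matrix (Fin r) (Fin n) ℚ)
    {e : Fin r → ℚ} {f : MvPolynomial (Fin n) k} (h : IsVal ord M e f) :
    initialForm (fun α β => ord.le (mwt M α) (mwt M β)) f ≠ 0 := by
  obtain ⟨α₀, hα₀, hα₀e⟩ := h.1
  rw [initialForm_eq_wcomp ord M h]
  intro h0
  have := coeff_wcomp M e f α₀
  rw [h0, coeff_zero, if_pos hα₀e] at this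
  exact notMem_support_iff.mpr this.symm hα₀

lemma wcomp_monomial_mul (M : Matrix (Fin r) (Fin n) ℚ) (e : Fin r → ℚ)
    (γ : Fin n →₀ ℕ) (c : k) (f : MvPolynomial (Fin n) k) :
    wcomp M (mwt M γ + e) (monomial γ c * f) = monomial γ c * wcomp M e f := by
  ext β
  rw [coeff_wcomp, coeff_monomial_mul', coeff_monomial_mul', coeff_wcomp]
  by_cases hγ : γ ≤ β
  · have hβ : γ + (β - γ) = β := add_tsub_cancel_of_le hγ
    have hw : mwt M β = mwt M γ + mwt M (β - γ) := by
      conv_lhs => rw [← hβ, mwt_add]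
    have hiff : mwt M β = mwt M γ + e ↔ mwt M (β - γ) = e := by
      rw [hw]; exact add_right_injective (mwt M γ) |>.eq_iff
    rw [if_pos hγ, if_pos hγ, mul_ite, mul_zero]
    simp only [hiff]
  · simp [if_neg hγ]

lemma isVal_monomial_mul (ord : LinearOrder (Fin r → ℚ)) (M : Matrix (Fin r) (Fin n) ℚ)
    (hord : ∀ a b c : Fin r → ℚ, ord.le a b → ord.le (a + c) (b + c))
    {e : Fin r → ℚ} {f : MvPolynomial (Fin n) k} (γ : Fin n →₀ ℕ) {c : k} (hc : c ≠ 0)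
    (h : IsVal ord M e f) :
    IsVal ord M (mwt M γ + e) (monomial γ c * f) := by
  obtain ⟨⟨α₀, hα₀, hα₀e⟩, hmin⟩ := h
  constructor
  · refine ⟨γ + α₀, ?_, by rw [mwt_add, hα₀e]⟩
    rw [mem_support_iff, coeff_monomial_mul]
    exact mul_ne_zero hc (mem_support_iff.1 hα₀)
  · intro β hβ
    rw [mem_support_iff, coeff_monomial_mul'] at hβ
    by_cases hγ : γ ≤ β
    · rw [if_pos hγ] at hβ
      have hne : coeff (β - γ) f ≠ 0 := fun h0 => hβ (by rw [h0, mul_zero])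
      have hle : ord.le e (mwt M (β - γ)) := hmin _ (mem_support_iff.2 hne)
      have := hord e (mwt M (β - γ)) (mwt M γ) hle
      have hβw : mwt M β = mwt M γ + mwt M (β - γ) := by
        conv_lhs => rw [← add_tsub_cancel_of_le hγ, mwt_add]
      rw [hβw, add_comm (mwt M γ) e, add_comm (mwt M γ) (mwt M (β - γ))]
      exact this
    · rw [if_neg hγ] at hβ
      exact absurd rfl hβ

end TropAux
namespace TropAux

section ValA
variable {k A : Type} [Field k] [CommRing A] [IsDomain A] [Algebra k A] {r : ℕ}
variable (ord : LinearOrder (Fin r → ℚ)) (v : A → Fin r → ℚ)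

lemma v_one (hmul : ∀ f g : A, f ≠ 0 → g ≠ 0 → v (f * g) = v f + v g) :
    v (1 : A) = 0 := by
  have h := hmul 1 1 one_ne_zero one_ne_zero
  rw [mul_one] at h
  exact left_eq_add.mp h

lemma v_pow (hmul : ∀ f g : A, f ≠ 0 → g ≠ 0 → v (f * g) = v f + v g)
    {x : A} (hx : x ≠ 0) (m : ℕ) : v (x ^ m) = m • v x := by
  induction m with
  | zero => simpa using v_one v hmul
  | succ m ih =>
    rw [pow_succ, hmul _ _ (pow_ne_zero m hx) hx, ih, succ_nsmul]

lemma v_prod (hmul : ∀ f g : A, f ≠ 0 → g ≠ 0 → v (f * g) = v f + v g)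
    {ι : Type} (s : Finset ι) (x : ι → A) (hx : ∀ i ∈ s, x i ≠ 0) :
    v (∏ i ∈ s, x i) = ∑ i ∈ s, v (x i) := by
  classical
  induction s using Finset.induction_on with
  | empty => simpa using v_one v hmul
  | @insert a s ha ih =>
    rw [Finset.prod_insert ha, Finset.sum_insert ha,
      hmul _ _ (hx a (Finset.mem_insert_self a s))
        (Finset.prod_ne_zero_iff.mpr fun i hi => hx i (Finset.mem_insert_of_mem hi)),
      ih fun i hi => hx i (Finset.mem_insert_of_mem hi)]

lemma v_neg (hscal : ∀ (c : k) (f : A), c ≠ 0 → f ≠ 0 → v (algebraMap k A c * f) = v f)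
    {x : A} (hx : x ≠ 0) : v (-x) = v x := by
  have h := hscal (-1) x (neg_ne_zero.mpr one_ne_zero) hx
  rwa [map_neg, map_one, neg_one_mul] at h

lemma v_sum_le
    (hadd : ∀ f g : A, f ≠ 0 → g ≠ 0 → f + g ≠ 0 →
      ord.le (v f) (v (f + g)) ∨ ord.le (v g) (v (f + g)))
    {ι : Type} (s : Finset ι) (t : ι → A) (m : Fin r → ℚ)
    (ht : ∀ i ∈ s, t i ≠ 0) (hm : ∀ i ∈ s, ord.le m (v (t i)))
    (hs : (∑ i ∈ s, t i) ≠ 0) : ord.le m (v (∑ i ∈ s, t i)) := by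
  classical
  induction s using Finset.induction_on with
  | empty => simp at hs
  | @insert a s ha ih =>
    rw [Finset.sum_insert ha] at hs ⊢
    by_cases h0 : (∑ i ∈ s, t i) = 0
    · rw [h0, add_zero]
      exact hm a (Finset.mem_insert_self a s)
    · rcases hadd (t a) (∑ i ∈ s, t i) (ht a (Finset.mem_insert_self a s)) h0 hs with h | h
      · exact ord.le_trans _ _ _ (hm a (Finset.mem_insert_self a s)) h
      · exact ord.le_trans _ _ _
          (ih (fun i hi => ht i (Finset.mem_insert_of_mem hi))
            (fun i hi => hm i (Finset.mem_insert_of_mem hi)) h0) h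

lemma v_sum_ne_zero
    (hadd : ∀ f g : A, f ≠ 0 → g ≠ 0 → f + g ≠ 0 →
      ord.le (v f) (v (f + g)) ∨ ord.le (v g) (v (f + g)))
    (hscal : ∀ (c : k) (f : A), c ≠ 0 → f ≠ 0 → v (algebraMap k A c * f) = v f)
    {ι : Type} (s : Finset ι) (t : ι → A) (i₀ : ι) (hi₀ : i₀ ∈ s)
    (ht : ∀ i ∈ s, t i ≠ 0)
    (hlt : ∀ i ∈ s, i ≠ i₀ → ord.lt (v (t i₀)) (v (t i))) :
    (∑ i ∈ s, t i) ≠ 0 := by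
  classical
  intro hsum
  rw [← Finset.add_sum_erase s t hi₀] at hsum
  by_cases h0 : (∑ i ∈ s.erase i₀, t i) = 0
  · rw [h0, add_zero] at hsum
    exact ht i₀ hi₀ hsum
  · obtain ⟨j, hj, hjmin⟩ := @Finset.exists_min_image _ _ ord (s.erase i₀)
      (fun i => v (t i)) (Finset.nonempty_of_sum_ne_zero h0)
    have hjlb : ord.le (v (t j)) (v (∑ i ∈ s.erase i₀, t i)) :=
      v_sum_le ord v hadd (s.erase i₀) t (v (t j))
        (fun i hi => ht i (Finset.mem_of_mem_erase hi)) hjmin h0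
    have heq : t i₀ = -(∑ i ∈ s.erase i₀, t i) := eq_neg_of_add_eq_zero_left hsum
    have hv : v (t i₀) = v (∑ i ∈ s.erase i₀, t i) := by
      rw [heq, v_neg (k := k) v hscal h0]
    have hlt' := hlt j (Finset.mem_of_mem_erase hj) (Finset.ne_of_mem_erase hj)
    rw [← hv] at hjlb
    exact ((ord.lt_iff_le_not_ge _ _).mp hlt').2 hjlb

end ValA

section SumForm
variable {k : Type} [Field k] {n r : ℕ}

lemma wcomp_sum (M : Matrix (Fin r) (Fin n) ℚ) (e : Fin r → ℚ)
    {ι : Type} (s : Finset ι) (f : ι → MvPolynomial (Fin n) k) :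
    wcomp M e (∑ i ∈ s, f i) = ∑ i ∈ s, wcomp M e (f i) := by
  classical
  induction s using Finset.induction_on with
  | empty => simpa using wcomp_zero M e
  | @insert a s ha ih =>
    rw [Finset.sum_insert ha, Finset.sum_insert ha, wcomp_add, ih]

lemma sum_initialForm (ord : LinearOrder (Fin r → ℚ)) (M : Matrix (Fin r) (Fin n) ℚ)
    (I : Ideal (MvPolynomial (Fin n) k)) (e : Fin r → ℚ)
    {ι : Type} (s : Finset ι) (F : ι → MvPolynomial (Fin n) k)
    (hF : ∀ t ∈ s, F t ∈ I ∧ F t ≠ 0 ∧ IsVal ord M e (F t)) :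
    (∑ t ∈ s, initialForm (fun α β => ord.le (mwt M α) (mwt M β)) (F t)) = 0 ∨
      ∃ f, f ∈ I ∧ f ≠ 0 ∧ IsVal ord M e f ∧
        initialForm (fun α β => ord.le (mwt M α) (mwt M β)) f
          = ∑ t ∈ s, initialForm (fun α β => ord.le (mwt M α) (mwt M β)) (F t) := by
  classical
  induction s using Finset.induction_on with
  | empty => left; simp
  | @insert a s ha ih =>
    have hFa := hF a (Finset.mem_insert_self a s)
    rw [Finset.sum_insert ha]
    rcases ih (fun t ht => hF t (Finset.mem_insert_of_mem ht)) with h0 | ⟨g, hgI, hg0, hge, hgin⟩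
    · rw [h0, add_zero]
      right
      exact ⟨F a, hFa.1, hFa.2.1, hFa.2.2, rfl⟩
    · rw [← hgin, initialForm_eq_wcomp ord M hFa.2.2, initialForm_eq_wcomp ord M hge,
        ← wcomp_add]
      by_cases hz : wcomp M e (F a + g) = 0
      · left; exact hz
      · right
        have hne : F a + g ≠ 0 := by
          intro h0
          rw [h0, wcomp_zero] at hz
          exact hz rfl
        have hval : IsVal ord M e (F a + g) := by
          constructor
          · obtain ⟨β, hβ⟩ := MvPolynomial.ne_zero_iff.mp hz
            rw [coeff_wcomp] at hβ
            by_cases hc : mwt M β = e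
            · rw [if_pos hc] at hβ
              exact ⟨β, mem_support_iff.2 hβ, hc⟩
            · rw [if_neg hc] at hβ
              exact absurd rfl hβ
          · intro β hβ
            rw [mem_support_iff, coeff_add] at hβ
            by_cases h1 : coeff β (F a) ≠ 0
            · exact hFa.2.2.2 β (mem_support_iff.2 h1)
            · push_neg at h1
              have h2 : coeff β g ≠ 0 := by
                intro h2; rw [h1, h2, add_zero] at hβ; exact hβ rfl
              exact hge.2 β (mem_support_iff.2 h2)
        exact ⟨F a + g, I.add_mem hFa.1 hgI, hne, hval,
          initialForm_eq_wcomp ord M hval⟩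

end SumForm

end TropAux

namespace TropAux

section Homog
variable {k : Type} [Field k] {n r : ℕ}

lemma homog_mem_initialIdeal (ord : LinearOrder (Fin r → ℚ)) (M : Matrix (Fin r) (Fin n) ℚ)
    (hord : ∀ a b c : Fin r → ℚ, ord.le a b → ord.le (a + c) (b + c))
    (I : Ideal (MvPolynomial (Fin n) k)) (d : Fin r → ℚ) (g : MvPolynomial (Fin n) k)
    (hg : g ∈ initialIdeal (fun α β => ord.le (mwt M α) (mwt M β)) I)
    (hgd : wcomp M d g = g) (hg0 : g ≠ 0) :
    ∃ f, f ∈ I ∧ f ≠ 0 ∧ IsVal ord M d f ∧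
      initialForm (fun α β => ord.le (mwt M α) (mwt M β)) f = g := by
  classical
  have hg' : g ∈ Submodule.span (MvPolynomial (Fin n) k)
      {h | ∃ f ∈ I, f ≠ 0 ∧ h = initialForm (fun α β => ord.le (mwt M α) (mwt M β)) f} := hg
  obtain ⟨c, hcsupp, hcsum⟩ := Submodule.mem_span_set.mp hg'
  have hch : ∀ x : MvPolynomial (Fin n) k, ∃ f, x ∈ c.support →
      f ∈ I ∧ f ≠ 0 ∧ x = initialForm (fun α β => ord.le (mwt M α) (mwt M β)) f := by
    intro x
    by_cases hx : x ∈ c.support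
    · obtain ⟨f, hfI, hf0, hfx⟩ := hcsupp (Finset.mem_coe.mpr hx)
      exact ⟨f, fun _ => ⟨hfI, hf0, hfx⟩⟩
    · exact ⟨1, fun h => absurd h hx⟩
  choose F hFspec using hch
  have hev : ∀ x : MvPolynomial (Fin n) k, ∃ e, x ∈ c.support → IsVal ord M e (F x) := by
    intro x
    by_cases hx : x ∈ c.support
    · obtain ⟨e, he⟩ := exists_isVal ord M (hFspec x hx).2.1
      exact ⟨e, fun _ => he⟩
    · exact ⟨0, fun h => absurd h hx⟩
  choose eF heF using hev
  set T := c.support.sigma (fun x => (c x).support) with hT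
  have hTmem : ∀ p ∈ T, p.1 ∈ c.support ∧ p.2 ∈ (c p.1).support := by
    intro p hp
    rw [hT, Finset.mem_sigma] at hp
    exact hp
  set G : (Σ _ : MvPolynomial (Fin n) k, (Fin n →₀ ℕ)) → MvPolynomial (Fin n) k :=
    fun p => monomial p.2 (coeff p.2 (c p.1)) * F p.1 with hG
  set ep : (Σ _ : MvPolynomial (Fin n) k, (Fin n →₀ ℕ)) → (Fin r → ℚ) :=
    fun p => mwt M p.2 + eF p.1 with hep
  have hGI : ∀ p ∈ T, G p ∈ I := fun p hp =>
    I.mul_mem_left _ ((hFspec p.1 (hTmem p hp).1).1)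
  have hGval : ∀ p ∈ T, IsVal ord M (ep p) (G p) := by
    intro p hp
    exact isVal_monomial_mul ord M hord p.2
      (mem_support_iff.mp (hTmem p hp).2) (heF p.1 (hTmem p hp).1)
  have hG0 : ∀ p ∈ T, G p ≠ 0 := by
    intro p hp
    obtain ⟨β, hβ, -⟩ := (hGval p hp).1
    intro h0
    rw [h0] at hβ
    simp at hβ
  have hGin : ∀ p ∈ T, initialForm (fun α β => ord.le (mwt M α) (mwt M β)) (G p)
      = monomial p.2 (coeff p.2 (c p.1)) *
          initialForm (fun α β => ord.le (mwt M α) (mwt M β)) (F p.1) := by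
    intro p hp
    rw [initialForm_eq_wcomp ord M (hGval p hp),
      initialForm_eq_wcomp ord M (heF p.1 (hTmem p hp).1)]
    exact wcomp_monomial_mul M (eF p.1) p.2 _ (F p.1)
  have hgsum : g = ∑ p ∈ T, initialForm (fun α β => ord.le (mwt M α) (mwt M β)) (G p) := by
    rw [← hcsum, Finsupp.sum]
    calc ∑ x ∈ c.support, c x • x
        = ∑ x ∈ c.support, ∑ γ ∈ (c x).support,
            monomial γ (coeff γ (c x)) *
              initialForm (fun α β => ord.le (mwt M α) (mwt M β)) (F x) := by
          refine Finset.sum_congr rfl fun x hx => ?_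
          calc c x • x = c x * initialForm (fun α β => ord.le (mwt M α) (mwt M β)) (F x) := by
                rw [smul_eq_mul]
                exact congrArg _ (hFspec x hx).2.2
            _ = _ := by
                conv_lhs => rw [as_sum (c x)]
                rw [Finset.sum_mul]
      _ = ∑ p ∈ T, monomial p.2 (coeff p.2 (c p.1)) *
            initialForm (fun α β => ord.le (mwt M α) (mwt M β)) (F p.1) := by
          rw [hT, Finset.sum_sigma]
      _ = _ := Finset.sum_congr rfl fun p hp => (hGin p hp).symm
  have hgsum2 : g = ∑ p ∈ T.filter (fun p => ep p = d),
      initialForm (fun α β => ord.le (mwt M α) (mwt M β)) (G p) := by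
    conv_lhs => rw [← hgd]
    conv_lhs => rw [hgsum]
    rw [wcomp_sum]
    rw [Finset.sum_congr rfl (g := fun p => if ep p = d
        then initialForm (fun α β => ord.le (mwt M α) (mwt M β)) (G p) else 0)
      (fun p hp => by
        rw [initialForm_eq_wcomp ord M (hGval p hp), wcomp_wcomp])]
    rw [Finset.sum_filter]
  rcases sum_initialForm ord M I d (T.filter (fun p => ep p = d)) G
      (fun p hp => by
        have hpT := Finset.mem_of_mem_filter p hp
        have hpd := (Finset.mem_filter.mp hp).2
        refine ⟨hGI p hpT, hG0 p hpT, ?_⟩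
        have := hGval p hpT
        rwa [hpd] at this) with h0 | ⟨f, hfI, hf0, hfv, hfin⟩
  · exact absurd (hgsum2.trans h0) hg0
  · exact ⟨f, hfI, hf0, hfv, by rw [hfin, ← hgsum2]⟩

end Homog

end TropAux

/-- **Higher rank tropicalization of a valuation** (Proposition `prop-values-in-trop-var`).
Let `v` be a valuation over `k` on a domain `A` with values in `ℚ^r`, where `ℚ^r` carries a
linear order `ord` making it a linearly ordered abelian group.  Let `b_1, …, b_n` be nonzero
elements of `A`, `I` the kernel of the presentation `x_i ↦ b_i`, and `M` the matrix whose
`i`-th column is `v(b_i)`.  Then `in_M(I)` contains no monomial, i.e. `M ∈ T^r(I)`. -/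
theorem stmt_16 {k A : Type} [Field k] [CommRing A] [IsDomain A] [Algebra k A]
    {n r : ℕ} (ord : LinearOrder (Fin r → ℚ))
    (hord : ∀ a b c : Fin r → ℚ, ord.le a b → ord.le (a + c) (b + c))
    (v : A → Fin r → ℚ)
    (hadd : ∀ f g : A, f ≠ 0 → g ≠ 0 → f + g ≠ 0 →
      ord.le (v f) (v (f + g)) ∨ ord.le (v g) (v (f + g)))
    (hmul : ∀ f g : A, f ≠ 0 → g ≠ 0 → v (f * g) = v f + v g)
    (hscal : ∀ (c : k) (f : A), c ≠ 0 → f ≠ 0 → v (algebraMap k A c * f) = v f)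
    (b : Fin n → A) (hb : ∀ i, b i ≠ 0)
    (M : Matrix (Fin r) (Fin n) ℚ) (hM : ∀ i l, M l i = v (b i) l) :
    ∀ α : Fin n →₀ ℕ,
      MvPolynomial.monomial α (1 : k) ∉
        initialIdeal (fun α β => ord.le (mwt M α) (mwt M β))
          (RingHom.ker (MvPolynomial.aeval b : MvPolynomial (Fin n) k →ₐ[k] A)) := by
  intro α hmem
  classical
  set I := RingHom.ker (MvPolynomial.aeval b : MvPolynomial (Fin n) k →ₐ[k] A) with hI
  have hg0 : (monomial α (1 : k)) ≠ 0 := fun h =>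
    one_ne_zero (MvPolynomial.monomial_eq_zero.mp h)
  have hsupp : (monomial α (1 : k)).support = {α} := by
    rw [support_monomial, if_neg one_ne_zero]
  have hgd : TropAux.wcomp M (mwt M α) (monomial α (1 : k)) = monomial α 1 := by
    apply TropAux.wcomp_of_support
    intro β hβ
    rw [hsupp, Finset.mem_singleton] at hβ
    rw [hβ]
  obtain ⟨f, hfI, hf0, hfval, hfin⟩ :=
    TropAux.homog_mem_initialIdeal ord M hord I (mwt M α) (monomial α 1) hmem hgd hg0
  have hw : TropAux.wcomp M (mwt M α) f = monomial α 1 := by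
    rw [← TropAux.initialForm_eq_wcomp ord M hfval, hfin]
  have hmem_iff : ∀ β, (mwt M β = mwt M α ∧ β ∈ f.support) ↔ β = α := by
    intro β
    rw [← TropAux.mem_support_wcomp M _ f β, hw, hsupp, Finset.mem_singleton]
  have hαs : α ∈ f.support := ((hmem_iff α).mpr rfl).2
  have hker : (aeval b) f = 0 := by rwa [hI, RingHom.mem_ker] at hfI
  set t : (Fin n →₀ ℕ) → A :=
    fun β => algebraMap k A (coeff β f) * β.prod fun j m => b j ^ m with ht
  have hsum : ∑ β ∈ f.support, t β = aeval b f := by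
    conv_rhs => rw [as_sum f]
    rw [map_sum]
    exact Finset.sum_congr rfl fun β _ => by simp only [ht, aeval_monomial]
  have hP : ∀ β : Fin n →₀ ℕ, (β.prod fun j m => b j ^ m) ≠ 0 := by
    intro β
    rw [Finsupp.prod]
    exact Finset.prod_ne_zero_iff.mpr fun j _ => pow_ne_zero _ (hb j)
  have ht0 : ∀ β ∈ f.support, t β ≠ 0 := by
    intro β hβ
    simp only [ht]
    exact mul_ne_zero (fun h => (mem_support_iff.mp hβ)
      ((map_eq_zero_iff _ (algebraMap k A).injective).mp h)) (hP β)
  have hvt : ∀ β ∈ f.support, v (t β) = mwt M β := by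
    intro β hβ
    simp only [ht]
    rw [hscal _ _ (mem_support_iff.mp hβ) (hP β), Finsupp.prod,
      TropAux.v_prod v hmul β.support (fun j => b j ^ β j)
        (fun j _ => pow_ne_zero _ (hb j))]
    funext i
    rw [Finset.sum_apply]
    calc ∑ j ∈ β.support, v (b j ^ β j) i
        = ∑ j ∈ β.support, M i j * (β j : ℚ) := by
          refine Finset.sum_congr rfl fun j _ => ?_
          rw [TropAux.v_pow v hmul (hb j), hM j i]
          simp [mul_comm]
      _ = ∑ j, M i j * (β j : ℚ) :=
          Finset.sum_subset (Finset.subset_univ _) (fun j _ hj => by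
            rw [Finsupp.notMem_support_iff.mp hj]; simp)
      _ = mwt M β i := rfl
  have hlt : ∀ β ∈ f.support, β ≠ α → ord.lt (v (t α)) (v (t β)) := by
    intro β hβ hne
    rw [hvt α hαs, hvt β hβ]
    have hle : ord.le (mwt M α) (mwt M β) := hfval.2 β hβ
    have hneq : mwt M β ≠ mwt M α := fun h => hne ((hmem_iff β).mp ⟨h, hβ⟩)
    rw [ord.lt_iff_le_not_ge]
    exact ⟨hle, fun h => hneq (ord.le_antisymm _ _ h hle)⟩
  have hnz := TropAux.v_sum_ne_zero ord v hadd hscal f.support t α hαs ht0 hlt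
  rw [hsum, hker] at hnz
  exact hnz rfl
end
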